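/- arXiv:1908.05220 — 4 statements merged into one kernel-verified Lean document; each statement's English description precedes it below -/
import Mathlib

section
/- For k ≥ 1 the set {1,2,...,k} maximizes the sumset-divisor count d among all nonempty subsets of {0,1,...,k}; i.e., d(A) ≤ d({1,...,k}) for all nonempty A ⊆ {0,...,k}, with uniqueness of the maximizer when k ∉ {1, 3}. -/
open Pointwise

/-- The number of sumset divisors of a finite set of naturals. -/
noncomputable def numDivisors (A : Finset ℕ) : ℕ :=
  {B : Finset ℕ | ∃ C : Finset ℕ, A = B + C}.ncard

open Finset


/-- number of compositions of `m` with parts in `[1,g]`. -/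
def Tc (g : ℕ) : ℕ → ℕ
  | 0 => 1
  | (m+1) => ∑ i ∈ (Finset.Ico (m+1-g) (m+1)).attach, Tc g i.val
  decreasing_by exact (Finset.mem_Ico.mp i.2).2

lemma Tc_succ (g m : ℕ) : Tc g (m+1) = ∑ i ∈ Finset.Ico (m+1-g) (m+1), Tc g i := by
  rw [Tc, Finset.sum_attach]

def Ei (n : ℕ) : ℕ := ∑ g ∈ Finset.Icc 1 (n+1), Tc g (n+1-g)

lemma Tc_pos (g m : ℕ) (hg : 1 ≤ g) : 1 ≤ Tc g m := by
  induction m using Nat.strong_induction_on with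
  | _ m ih =>
    match m with
    | 0 => simp [Tc]
    | (m+1) =>
      rw [Tc_succ]
      have hm : m ∈ Finset.Ico (m+1-g) (m+1) := by
        simp only [Finset.mem_Ico]; omega
      calc 1 ≤ Tc g m := ih m (by omega)
        _ ≤ _ := Finset.single_le_sum (fun i _ => Nat.zero_le _) hm

lemma Tc_one (g : ℕ) (hg : 1 ≤ g) : Tc g 1 = 1 := by
  rw [Tc_succ]
  have : (1:ℕ) - g = 0 := by omega
  rw [this]
  simp [Tc]

lemma Tc_mono (g m : ℕ) (hg : 1 ≤ g) : Tc g m ≤ Tc g (m+1) := by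
  rw [Tc_succ]
  exact Finset.single_le_sum (f := fun i => Tc g i) (fun i _ => Nat.zero_le _)
    (by simp only [Finset.mem_Ico]; omega)

lemma Tc_mono' (g : ℕ) {a b : ℕ} (hg : 1 ≤ g) (h : a ≤ b) : Tc g a ≤ Tc g b := by
  induction b with
  | zero => simpa [Nat.le_zero.mp h]
  | succ b ih =>
    rcases Nat.lt_or_ge a (b+1) with h' | h'
    · exact le_trans (ih (by omega)) (Tc_mono g b hg)
    · have : a = b+1 := by omega
      simp [this]

lemma Tc_le_two (g m : ℕ) (hg : 1 ≤ g) : Tc g (m+1) ≤ 2 * Tc g m := by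
  match m with
  | 0 => rw [Tc_one g hg]; have := Tc_pos g 0 hg; omega
  | (m+1) =>
    rw [Tc_succ g (m+1), Finset.sum_Ico_succ_top (by omega : m+2-g ≤ m+1)]
    have h1 : ∑ i ∈ Finset.Ico (m+2-g) (m+1), Tc g i
        ≤ ∑ i ∈ Finset.Ico (m+1-g) (m+1), Tc g i :=
      Finset.sum_le_sum_of_subset (Finset.Ico_subset_Ico (by omega) le_rfl)
    rw [← Tc_succ] at h1
    omega

lemma Tc_two_step (g m : ℕ) (hg : 2 ≤ g) :
    Tc g (m+1) + Tc g m ≤ Tc g (m+2) := by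
  rw [Tc_succ g (m+1)]
  have hsub : Finset.Ico m (m+2) ⊆ Finset.Ico (m+2-g) (m+2) := by
    apply Finset.Ico_subset_Ico (by omega) le_rfl
  calc Tc g (m+1) + Tc g m = ∑ i ∈ Finset.Ico m (m+2), Tc g i := by
        rw [show m+2 = (m+1)+1 from rfl, Finset.sum_Ico_succ_top (by omega),
          Finset.sum_Ico_succ_top (by omega)]
        simp; ring
    _ ≤ _ := Finset.sum_le_sum_of_subset hsub

lemma Tc_three_step (g m : ℕ) (hg : 3 ≤ g) (hm : 1 ≤ m) :
    Tc g (m+1) + Tc g m + Tc g (m-1) ≤ Tc g (m+2) := by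
  match m with
  | (m+1) =>
    rw [Tc_succ g (m+2)]
    have hsub : Finset.Ico m (m+3) ⊆ Finset.Ico (m+3-g) (m+3) :=
      Finset.Ico_subset_Ico (by omega) le_rfl
    calc Tc g (m+2) + Tc g (m+1) + Tc g m = ∑ i ∈ Finset.Ico m (m+3), Tc g i := by
          rw [show m+3 = (m+2)+1 from rfl, Finset.sum_Ico_succ_top (by omega),
            show m+2 = (m+1)+1 from rfl, Finset.sum_Ico_succ_top (by omega),
            Finset.sum_Ico_succ_top (by omega)]
          simp; ring
      _ ≤ _ := Finset.sum_le_sum_of_subset hsub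

lemma Tc_two_val (g : ℕ) (hg : 2 ≤ g) : Tc g 2 = 2 := by
  rw [Tc_succ]
  have : (2:ℕ) - g = 0 := by omega
  rw [this, show (2:ℕ) = 1 + 1 from rfl, Finset.sum_Ico_succ_top (by omega)]
  simp [Tc_one g (by omega), Tc]

lemma Tc32 (g m : ℕ) (hg : 2 ≤ g) (hm : 1 ≤ m) : 3 * Tc g m ≤ 2 * Tc g (m+1) := by
  obtain ⟨m', rfl⟩ : ∃ m', m = m' + 1 := ⟨m-1, by omega⟩
  have h1 := Tc_two_step g m' hg
  have h2 := Tc_le_two g m' (by omega)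
  have e : m' + 1 + 1 = m' + 2 := rfl
  rw [e]
  omega

lemma Tc32s (g m : ℕ) (hg : 3 ≤ g) (hm : 1 ≤ m) : 3 * Tc g m + 1 ≤ 2 * Tc g (m+1) := by
  match m with
  | 1 => rw [Tc_one g (by omega), Tc_two_val g (by omega)]
  | (m+2) =>
    have h1 := Tc_three_step g (m+1) hg (by omega)
    have h2 := Tc_le_two g (m+1) (by omega)
    have h3 := Tc_pos g m (by omega)
    simp only [show m+1-1 = m from rfl] at h1
    have h1' : Tc g (m+2) + Tc g (m+1) + Tc g m ≤ Tc g (m+3) := h1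
    have h2' : Tc g (m+2) ≤ 2 * Tc g (m+1) := h2
    have goal : 3 * Tc g (m+2) + 1 ≤ 2 * Tc g (m+3) := by omega
    exact goal

lemma Tc_one_left (m : ℕ) : Tc 1 m = 1 := by
  induction m with
  | zero => simp [Tc]
  | succ m ih =>
    rw [Tc_succ]
    simp only [show m+1-1 = m from rfl]
    rw [Finset.sum_Ico_succ_top (by omega)]
    simp [ih]

lemma Ei_eq (n : ℕ) : Ei n = (∑ g ∈ Finset.Icc 1 n, Tc g (n+1-g)) + 1 := by
  rw [Ei, Finset.sum_Icc_succ_top (by omega)]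
  simp [Tc]

lemma Ei_succ_eq (n : ℕ) : Ei (n+1) = (∑ g ∈ Finset.Icc 1 n, Tc g (n+2-g)) + 2 := by
  rw [Ei, Finset.sum_Icc_succ_top (by omega : 1 ≤ n+2),
    Finset.sum_Icc_succ_top (by omega : 1 ≤ n+1)]
  have h1 : n+2-(n+1) = 1 := by omega
  have h2 : n+2-(n+2) = 0 := by omega
  rw [h1, h2, Tc_one (n+1) (by omega)]
  simp [Tc]

lemma Ei_pos (n : ℕ) : 1 ≤ Ei n := by rw [Ei_eq]; omega

lemma LE1 (n : ℕ) : Ei n + 1 ≤ Ei (n+1) := by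
  rw [Ei_eq, Ei_succ_eq]
  have : (∑ g ∈ Finset.Icc 1 n, Tc g (n+1-g)) ≤ ∑ g ∈ Finset.Icc 1 n, Tc g (n+2-g) := by
    apply Finset.sum_le_sum
    intro g hg
    simp only [Finset.mem_Icc] at hg
    exact Tc_mono' g (by omega) (by omega)
  omega

lemma Ei_mono {a b : ℕ} (h : a ≤ b) : Ei a ≤ Ei b := by
  induction b with
  | zero => simp [Nat.le_zero.mp h]
  | succ b ih =>
    rcases Nat.lt_or_ge a (b+1) with h' | h'
    · have := LE1 b; have := ih (by omega); omega
    · have : a = b+1 := by omega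
      simp [this]

lemma LE3 (n : ℕ) : Ei (n+1) ≤ 2 * Ei n := by
  rw [Ei_succ_eq, Ei_eq]
  have h : (∑ g ∈ Finset.Icc 1 n, Tc g (n+2-g)) ≤
      2 * ∑ g ∈ Finset.Icc 1 n, Tc g (n+1-g) := by
    rw [Finset.mul_sum]
    apply Finset.sum_le_sum
    intro g hg
    simp only [Finset.mem_Icc] at hg
    have : n+2-g = (n+1-g)+1 := by omega
    rw [this]
    exact Tc_le_two g _ (by omega)
  omega

lemma sum_split_one (n : ℕ) (hn : 1 ≤ n) (f : ℕ → ℕ) :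
    ∑ g ∈ Finset.Icc 1 n, f g = f 1 + ∑ g ∈ Finset.Icc 2 n, f g := by
  have : Finset.Icc 1 n = insert 1 (Finset.Icc 2 n) := by
    ext x; simp only [Finset.mem_Icc, Finset.mem_insert]; omega
  rw [this, Finset.sum_insert (by simp)]

lemma LE3s (n : ℕ) (hn : 1 ≤ n) : Ei (n+1) + 1 ≤ 2 * Ei n := by
  rw [Ei_succ_eq, Ei_eq, sum_split_one n hn _, sum_split_one n hn _]
  rw [Tc_one_left, Tc_one_left]
  have h : (∑ g ∈ Finset.Icc 2 n, Tc g (n+2-g)) ≤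
      2 * ∑ g ∈ Finset.Icc 2 n, Tc g (n+1-g) := by
    rw [Finset.mul_sum]
    apply Finset.sum_le_sum
    intro g hg
    simp only [Finset.mem_Icc] at hg
    have : n+2-g = (n+1-g)+1 := by omega
    rw [this]
    exact Tc_le_two g _ (by omega)
  omega

lemma LE2 (n : ℕ) : 3 * Ei n ≤ 2 * Ei (n+1) := by
  rcases Nat.lt_or_ge n 1 with h | h
  · interval_cases n
    · have h1 := LE1 0
      have h2 : Ei 0 = 1 := by rw [Ei_eq]; simp
      omega
  · rw [Ei_succ_eq, Ei_eq, sum_split_one n h _, sum_split_one n h _]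
    rw [Tc_one_left, Tc_one_left]
    have hsum : 3 * (∑ g ∈ Finset.Icc 2 n, Tc g (n+1-g)) ≤
        2 * ∑ g ∈ Finset.Icc 2 n, Tc g (n+2-g) := by
      rw [Finset.mul_sum, Finset.mul_sum]
      apply Finset.sum_le_sum
      intro g hg
      simp only [Finset.mem_Icc] at hg
      have : n+2-g = (n+1-g)+1 := by omega
      rw [this]
      exact Tc32 g _ (by omega) (by omega)
    omega

lemma Ei_zero : Ei 0 = 1 := by rw [Ei_eq]; simp
lemma Ei_one : Ei 1 = 2 := by
  rw [Ei_eq]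
  simp [Tc_one_left]
lemma Ei_two : Ei 2 = 3 := by
  rw [Ei_eq, Finset.sum_Icc_succ_top (by omega : (1:ℕ) ≤ 2)]
  simp [Tc_one_left, Tc_one 2 (by omega)]
lemma Ei_three : Ei 3 = 5 := by
  rw [Ei_eq, Finset.sum_Icc_succ_top (by omega : (1:ℕ) ≤ 3),
    Finset.sum_Icc_succ_top (by omega : (1:ℕ) ≤ 2)]
  simp [Tc_one_left, Tc_one 3 (by omega), Tc_two_val 2 (by omega)]

lemma LE2s (n : ℕ) (hn : n ≠ 1) : 3 * Ei n + 1 ≤ 2 * Ei (n+1) := by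
  match n, hn with
  | 0, _ => rw [Ei_zero, Ei_one]
  | 2, _ => rw [Ei_two, Ei_three]
  | (n+3), _ =>
    have hn3 : 3 ≤ n+3 := by omega
    have h1 : 1 ≤ n+3 := by omega
    rw [Ei_succ_eq (n+3), Ei_eq (n+3), sum_split_one (n+3) h1 _, sum_split_one (n+3) h1 _]
    rw [Tc_one_left, Tc_one_left]
    have hsum : 3 * (∑ g ∈ Finset.Icc 2 (n+3), Tc g (n+3+1-g)) <
        2 * ∑ g ∈ Finset.Icc 2 (n+3), Tc g (n+3+2-g) := by
      rw [Finset.mul_sum, Finset.mul_sum]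
      apply Finset.sum_lt_sum
      · intro g hg
        simp only [Finset.mem_Icc] at hg
        have : n+3+2-g = (n+3+1-g)+1 := by omega
        rw [this]
        exact Tc32 g _ (by omega) (by omega)
      · refine ⟨3, by simp only [Finset.mem_Icc]; omega, ?_⟩
        have : n+3+2-3 = (n+3+1-3)+1 := by omega
        rw [this]
        have := Tc32s 3 (n+3+1-3) le_rfl (by omega)
        omega
    omega

lemma Ei_step (s j : ℕ) (hs : 1 ≤ s) : (s+2) * Ei j ≤ (s+1) * Ei (j+1) := by
  have key : 2 * ((s+2) * Ei j) ≤ 2 * ((s+1) * Ei (j+1)) := by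
    calc 2 * ((s+2) * Ei j) = (2*s+4) * Ei j := by ring
      _ ≤ (3*s+3) * Ei j := Nat.mul_le_mul_right _ (by omega)
      _ = (s+1) * (3 * Ei j) := by ring
      _ ≤ (s+1) * (2 * Ei (j+1)) := Nat.mul_le_mul_left _ (LE2 j)
      _ = 2 * ((s+1) * Ei (j+1)) := by ring
  exact Nat.le_of_mul_le_mul_left key (by norm_num)

lemma Ei_step_strict (s j : ℕ) (hs : 2 ≤ s) : (s+2) * Ei j + 1 ≤ (s+1) * Ei (j+1) := by
  match j with
  | 0 =>
    rw [Ei_zero, Ei_one]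
    omega
  | (j+1) =>
    have hE2 : 2 ≤ Ei (j+1) := by
      calc 2 = Ei 1 := Ei_one.symm
        _ ≤ Ei (j+1) := Ei_mono (by omega)
    have key : 2 * ((s+2) * Ei (j+1) + 1) ≤ 2 * ((s+1) * Ei (j+2)) := by
      calc 2 * ((s+2) * Ei (j+1) + 1) = (2*s+4) * Ei (j+1) + 2 := by ring
        _ ≤ (3*s+3) * Ei (j+1) := by
            have h1 : (2*s+4) * Ei (j+1) + (s-1) * Ei (j+1) = (3*s+3) * Ei (j+1) := by
              have : (2*s+4) + (s-1) = 3*s+3 := by omega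
              rw [← Nat.add_mul, this]
            have h2 : 2 ≤ (s-1) * Ei (j+1) :=
              le_trans hE2 (Nat.le_mul_of_pos_left _ (by omega))
            omega
        _ = (s+1) * (3 * Ei (j+1)) := by ring
        _ ≤ (s+1) * (2 * Ei (j+2)) := Nat.mul_le_mul_left _ (LE2 (j+1))
        _ = 2 * ((s+1) * Ei (j+2)) := by ring
    exact Nat.le_of_mul_le_mul_left key (by norm_num)

lemma chain (k t : ℕ) (ht1 : 1 ≤ t) (htk : t ≤ k) :
    (t+1) * Ei (k-t) ≤ 2 * Ei (k-1) := by
  induction t, ht1 using Nat.le_induction with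
  | base => simp
  | succ t ht ih =>
    have hstep : (t+2) * Ei (k-(t+1)) ≤ (t+1) * Ei (k-(t+1)+1) := Ei_step t _ ht
    have he : k-(t+1)+1 = k-t := by omega
    rw [he] at hstep
    calc (t+1+1) * Ei (k-(t+1)) = (t+2) * Ei (k-(t+1)) := by ring_nf
      _ ≤ (t+1) * Ei (k-t) := hstep
      _ ≤ 2 * Ei (k-1) := ih (by omega)

lemma chain_strict (k t : ℕ) (ht1 : 3 ≤ t) (htk : t ≤ k) :
    (t+1) * Ei (k-t) + 1 ≤ 2 * Ei (k-1) := by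
  obtain ⟨s, rfl⟩ : ∃ s, t = s + 1 := ⟨t-1, by omega⟩
  have hstep : (s+2) * Ei (k-(s+1)) + 1 ≤ (s+1) * Ei (k-(s+1)+1) :=
    Ei_step_strict s _ (by omega)
  have he : k-(s+1)+1 = k-s := by omega
  rw [he] at hstep
  calc (s+1+1) * Ei (k-(s+1)) + 1 = (s+2) * Ei (k-(s+1)) + 1 := by ring_nf
    _ ≤ (s+1) * Ei (k-s) := hstep
    _ ≤ 2 * Ei (k-1) := chain k s (by omega) (by omega)

open Pointwise Finset

set_option maxHeartbeats 1000000

open scoped Classical in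
noncomputable def DivF (N : ℕ) (A : Finset ℕ) : Finset (Finset ℕ) :=
  (Finset.range (N+1)).powerset.filter (fun B => ∃ C : Finset ℕ, A = B + C)


section Basic

variable {A B C : Finset ℕ}

lemma memAdd {a : ℕ} : a ∈ B + C ↔ ∃ b ∈ B, ∃ c ∈ C, b + c = a := Finset.mem_add

lemma sum_nonempty_left (h : (B + C).Nonempty) : B.Nonempty := (Finset.add_nonempty.mp h).1
lemma sum_nonempty_right (h : (B + C).Nonempty) : C.Nonempty := (Finset.add_nonempty.mp h).2

lemma min'_sum (hB : B.Nonempty) (hC : C.Nonempty) :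
    (B + C).min' (hB.add hC) = B.min' hB + C.min' hC := by
  apply le_antisymm
  · exact Finset.min'_le _ _ (memAdd.mpr ⟨_, B.min'_mem hB, _, C.min'_mem hC, rfl⟩)
  · apply Finset.le_min'
    intro a ha
    obtain ⟨b, hb, c, hc, rfl⟩ := memAdd.mp ha
    exact Nat.add_le_add (Finset.min'_le _ _ hb) (Finset.min'_le _ _ hc)

lemma max'_sum (hB : B.Nonempty) (hC : C.Nonempty) :
    (B + C).max' (hB.add hC) = B.max' hB + C.max' hC := by
  apply le_antisymm
  · apply Finset.max'_le
    intro a ha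
    obtain ⟨b, hb, c, hc, rfl⟩ := memAdd.mp ha
    exact Nat.add_le_add (Finset.le_max' _ _ hb) (Finset.le_max' _ _ hc)
  · exact Finset.le_max' _ _ (memAdd.mpr ⟨_, B.max'_mem hB, _, C.max'_mem hC, rfl⟩)

lemma cancel_singleton {j : ℕ} (h : B + {j} = C + {j}) : B = C := by
  ext x
  have hx : x + j ∈ B + {j} ↔ x + j ∈ C + {j} := by rw [h]
  simp only [memAdd, Finset.mem_singleton] at hx
  constructor
  · intro hxB
    obtain ⟨b, hb, c, hc, hbc⟩ := hx.mp ⟨x, hxB, j, rfl, rfl⟩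
    subst hc
    obtain rfl : b = x := by omega
    exact hb
  · intro hxC
    obtain ⟨b, hb, c, hc, hbc⟩ := hx.mpr ⟨x, hxC, j, rfl, rfl⟩
    subst hc
    obtain rfl : b = x := by omega
    exact hb

lemma image_sub_add {j : ℕ} (h : ∀ b ∈ B, j ≤ b) : (B.image (· - j)) + {j} = B := by
  ext x
  rw [memAdd]
  constructor
  · rintro ⟨b, hb, c, hc, rfl⟩
    rw [Finset.mem_singleton] at hc
    obtain ⟨b', hb', rfl⟩ := Finset.mem_image.mp hb
    have h1 := h b' hb'
    have heq : b' - j + c = b' := by rw [hc]; omega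
    rwa [heq]
  · intro hx
    refine ⟨x - j, Finset.mem_image.mpr ⟨x, hx, rfl⟩, j, Finset.mem_singleton_self j, ?_⟩
    have := h x hx
    omega

/-- every divisor B of a nonempty A has its elements bounded by max A -/
lemma divisor_subset_range (hA : A.Nonempty) (hBC : A = B + C) :
    B ⊆ Finset.range (A.max' hA + 1) := by
  intro b hb
  have hBne : B.Nonempty := sum_nonempty_left (hBC ▸ hA)
  have hCne : C.Nonempty := sum_nonempty_right (hBC ▸ hA)
  have : b + C.min' hCne ∈ A := hBC ▸ memAdd.mpr ⟨b, hb, _, C.min'_mem hCne, rfl⟩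
  have := Finset.le_max' _ _ this
  simp only [Finset.mem_range]
  omega

lemma numDivisors_eq_card (hA : A.Nonempty) {N : ℕ} (hN : A.max' hA ≤ N) :
    numDivisors A = (DivF N A).card := by
  rw [numDivisors, ← Set.ncard_coe_finset]
  congr 1
  ext B
  simp only [Set.mem_setOf_eq, Finset.coe_filter, DivF, Finset.mem_coe,
    Finset.mem_filter, Finset.mem_powerset, Set.mem_setOf_eq]
  constructor
  · rintro ⟨C, hC⟩
    refine ⟨?_, C, hC⟩
    exact (divisor_subset_range hA hC).trans (by
      intro x hx; simp only [Finset.mem_range] at hx ⊢; omega)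
  · rintro ⟨_, C, hC⟩
    exact ⟨C, hC⟩

end Basic

section Shift

variable {A₀ B C : Finset ℕ}

lemma min'_eq_zero (h0 : 0 ∈ A₀) : A₀.min' ⟨0, h0⟩ = 0 :=
  Nat.le_zero.mp (Finset.min'_le _ _ h0)

lemma divisor_zero_mem (h0 : 0 ∈ A₀) (hBC : A₀ = B + C) : 0 ∈ B := by
  have : (0:ℕ) ∈ B + C := hBC ▸ h0
  obtain ⟨b, hb, c, hc, hbc⟩ := memAdd.mp this
  obtain rfl : b = 0 := by omega
  exact hb

lemma divisor_zero_mem_right (h0 : 0 ∈ A₀) (hBC : A₀ = B + C) : 0 ∈ C := by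
  rw [add_comm] at hBC
  exact divisor_zero_mem h0 hBC

lemma divisor_subset (h0 : 0 ∈ A₀) (hBC : A₀ = B + C) : B ⊆ A₀ := by
  intro b hb
  have := divisor_zero_mem_right h0 hBC
  have : b + 0 ∈ B + C := memAdd.mpr ⟨b, hb, 0, this, rfl⟩
  rw [← hBC] at this
  simpa using this

lemma min'_eq_of {s t : Finset ℕ} (h : s = t) (hs : s.Nonempty) :
    s.min' hs = t.min' (h ▸ hs) := by cases h; rfl

lemma max'_eq_of {s t : Finset ℕ} (h : s = t) (hs : s.Nonempty) :
    s.max' hs = t.max' (h ▸ hs) := by cases h; rfl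

lemma shift_count (h0 : 0 ∈ A₀) (t : ℕ) :
    numDivisors (A₀ + {t}) = (t+1) * numDivisors A₀ := by
  classical
  have hA₀ : A₀.Nonempty := ⟨0, h0⟩
  set M := A₀.max' hA₀ with hM
  have htA : (A₀ + {t}).Nonempty := hA₀.add ⟨t, Finset.mem_singleton_self t⟩
  have hmaxA : (A₀ + {t}).max' htA = M + t := by
    rw [max'_sum hA₀ ⟨t, Finset.mem_singleton_self t⟩]
    simp [hM]
  have hminA : (A₀ + ({t} : Finset ℕ)).min' htA = t := by
    rw [min'_sum hA₀ ⟨t, Finset.mem_singleton_self t⟩, min'_eq_zero h0]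
    simp
  rw [numDivisors_eq_card htA (le_of_eq hmaxA), numDivisors_eq_card hA₀ (le_refl M)]
  have key : DivF (M+t) (A₀ + {t}) =
      (Finset.Icc 0 t).biUnion (fun j => (DivF M A₀).image (fun B => B + {j})) := by
    ext B
    simp only [DivF, Finset.mem_filter, Finset.mem_powerset, Finset.mem_biUnion,
      Finset.mem_Icc, Finset.mem_image]
    constructor
    · rintro ⟨hBsub, C, hC⟩
      have hBne : B.Nonempty := sum_nonempty_left (hC ▸ htA)
      have hCne : C.Nonempty := sum_nonempty_right (hC ▸ htA)
      have hmins : t = B.min' hBne + C.min' hCne := by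
        rw [← hminA, min'_eq_of hC htA]
        exact min'_sum hBne hCne
      have hmaxs : M + t = B.max' hBne + C.max' hCne := by
        rw [← hmaxA, max'_eq_of hC htA]
        exact max'_sum hBne hCne
      have hjt : B.min' hBne ≤ t := by omega
      refine ⟨B.min' hBne, ⟨Nat.zero_le _, hjt⟩, B.image (· - B.min' hBne), ⟨?_, ?_⟩, ?_⟩
      · -- B.image (· - min) ⊆ range (M+1)
        intro x hx
        obtain ⟨b, hb, rfl⟩ := Finset.mem_image.mp hx
        have h1 : b ≤ B.max' hBne := Finset.le_max' _ _ hb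
        have h2 : C.min' hCne ≤ C.max' hCne :=
          Finset.min'_le _ _ (C.max'_mem hCne)
        simp only [Finset.mem_range]
        omega
      · -- divisor of A₀
        refine ⟨C.image (· - (t - B.min' hBne)), ?_⟩
        have hCrec : (C.image (· - (t - B.min' hBne))) + {t - B.min' hBne} = C :=
          image_sub_add (fun c hc => by
            have := Finset.min'_le _ _ hc; omega)
        have hBrec : (B.image (· - B.min' hBne)) + {B.min' hBne} = B :=
          image_sub_add (fun b hb => Finset.min'_le _ _ hb)
        apply cancel_singleton (j := t)
        calc A₀ + {t} = B + C := hC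
          _ = ((B.image (· - B.min' hBne)) + {B.min' hBne})
              + ((C.image (· - (t - B.min' hBne))) + {t - B.min' hBne}) := by
              rw [hBrec, hCrec]
          _ = ((B.image (· - B.min' hBne)) + (C.image (· - (t - B.min' hBne))))
              + ({B.min' hBne} + {t - B.min' hBne}) := by abel
          _ = ((B.image (· - B.min' hBne)) + (C.image (· - (t - B.min' hBne)))) + {t} := by
              rw [Finset.singleton_add_singleton]
              congr 2
              omega
      · exact image_sub_add (fun b hb => Finset.min'_le _ _ hb)
    · rintro ⟨j, ⟨-, hjt⟩, B₀, ⟨hB₀sub, C₀, hC₀⟩, rfl⟩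
      constructor
      · intro x hx
        obtain ⟨b, hb, c, hc, rfl⟩ := memAdd.mp hx
        rw [Finset.mem_singleton] at hc
        have := hB₀sub hb
        simp only [Finset.mem_range] at this ⊢
        omega
      · refine ⟨C₀ + {t - j}, ?_⟩
        calc A₀ + {t} = (B₀ + C₀) + {t} := by rw [← hC₀]
          _ = (B₀ + {j}) + (C₀ + {t-j}) := by
              rw [show (B₀ + {j}) + (C₀ + {t-j}) = (B₀ + C₀) + ({j} + {t-j}) by abel,
                Finset.singleton_add_singleton]
              congr 2
              omega
  have hdisj : ∀ j ∈ Finset.Icc 0 t, ∀ j' ∈ Finset.Icc 0 t, j ≠ j' →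
      Disjoint ((DivF M A₀).image (fun B => B + {j}))
        ((DivF M A₀).image (fun B => B + {j'})) := by
    intro j hj j' hj' hne
    rw [Finset.disjoint_left]
    rintro X hX hX'
    obtain ⟨B1, hB1, rfl⟩ := Finset.mem_image.mp hX
    obtain ⟨B2, hB2, hEq⟩ := Finset.mem_image.mp hX'
    simp only [DivF, Finset.mem_filter, Finset.mem_powerset] at hB1 hB2
    obtain ⟨-, C1, hC1⟩ := hB1
    obtain ⟨-, C2, hC2⟩ := hB2
    have h01 : 0 ∈ B1 := divisor_zero_mem h0 hC1
    have h02 : 0 ∈ B2 := divisor_zero_mem h0 hC2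
    have hne1 : (B1 + ({j} : Finset ℕ)).Nonempty :=
      ⟨0 + j, memAdd.mpr ⟨0, h01, j, Finset.mem_singleton_self j, rfl⟩⟩
    have hm1 : (B1 + ({j} : Finset ℕ)).min' hne1 = j := by
      rw [min'_sum ⟨0, h01⟩ ⟨j, Finset.mem_singleton_self j⟩, min'_eq_zero h01]
      simp
    have hne2 : (B2 + ({j'} : Finset ℕ)).Nonempty :=
      ⟨0 + j', memAdd.mpr ⟨0, h02, j', Finset.mem_singleton_self j', rfl⟩⟩
    have hm2 : (B2 + ({j'} : Finset ℕ)).min' hne2 = j' := by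
      rw [min'_sum ⟨0, h02⟩ ⟨j', Finset.mem_singleton_self j'⟩, min'_eq_zero h02]
      simp
    apply hne
    rw [← hm1, ← hm2]
    exact min'_eq_of hEq.symm hne1
  rw [key, Finset.card_biUnion hdisj]
  calc ∑ j ∈ Finset.Icc 0 t, ((DivF M A₀).image (fun B => B + {j})).card
      = ∑ j ∈ Finset.Icc 0 t, (DivF M A₀).card :=
        Finset.sum_congr rfl (fun j _ =>
          Finset.card_image_of_injOn (fun B1 _ B2 _ h => cancel_singleton h))
    _ = (t+1) * (DivF M A₀).card := by
        rw [Finset.sum_const, Nat.card_Icc]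
        simp [Nat.smul_one_eq_cast]

end Shift

section Interval

/-- gap condition: from every element below m, another element within distance g -/
def GapLE (B : Finset ℕ) (g m : ℕ) : Prop :=
  ∀ x ∈ B, x < m → ∃ y ∈ B, x < y ∧ y ≤ x + g

open scoped Classical in
noncomputable def Wset (g m : ℕ) : Finset (Finset ℕ) :=
  ((Finset.range (m+1)).powerset).filter (fun B => 0 ∈ B ∧ m ∈ B ∧ GapLE B g m)

lemma cov {S : Finset ℕ} {m n : ℕ} (h0 : 0 ∈ S) (hsub : S ⊆ Finset.range (m+1))
    (hm : m ∈ S) (hmn : m ≤ n) (hgap : GapLE S (n-m+1) m) :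
    S + Finset.range (n-m+1) = Finset.range (n+1) := by
  ext a
  rw [memAdd]
  constructor
  · rintro ⟨s, hs, c, hc, rfl⟩
    have h1 := hsub hs
    simp only [Finset.mem_range] at h1 hc ⊢
    omega
  · intro ha
    simp only [Finset.mem_range] at ha
    have hPne : (S.filter (· ≤ a)).Nonempty := ⟨0, by simp [h0]⟩
    set x := (S.filter (· ≤ a)).max' hPne with hx
    have hxmem : x ∈ S ∧ x ≤ a := by
      have := (S.filter (· ≤ a)).max'_mem hPne
      rw [← hx] at this
      simpa using this
    have hxmax : ∀ y ∈ S, y ≤ a → y ≤ x := by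
      intro y hy hya
      exact Finset.le_max' _ _ (by simp [hy, hya])
    rcases le_or_gt (a - x) (n - m) with hcase | hcase
    · exact ⟨x, hxmem.1, a - x, by simp only [Finset.mem_range]; omega, by omega⟩
    · exfalso
      have hxm : x ≤ m := by
        have := hsub hxmem.1
        simp only [Finset.mem_range] at this
        omega
      have hxltm : x < m := by
        rcases Nat.lt_or_ge x m with h | h
        · exact h
        · exfalso; omega
      obtain ⟨y, hy, hxy, hyx⟩ := hgap x hxmem.1 hxltm
      have : y ≤ a := by omega
      have := hxmax y hy this
      omega

/-- the divisors of an interval are exactly the gap-bounded sets -/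
lemma divF_interval_char (n : ℕ) :
    DivF n (Finset.range (n+1)) =
      (Finset.range (n+1)).biUnion (fun m => Wset (n-m+1) m) := by
  classical
  ext B
  simp only [DivF, Wset, Finset.mem_filter, Finset.mem_powerset, Finset.mem_biUnion,
    Finset.mem_range]
  constructor
  · rintro ⟨hBsub, C, hC⟩
    have h0r : (0:ℕ) ∈ Finset.range (n+1) := by simp
    have h0B : 0 ∈ B := divisor_zero_mem h0r hC
    have hBne : B.Nonempty := ⟨0, h0B⟩
    have hACne : (B + C).Nonempty := by rw [← hC]; exact ⟨0, h0r⟩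
    have hCne : C.Nonempty := sum_nonempty_right hACne
    set m := B.max' hBne with hm
    have hrne : (Finset.range (n+1)).Nonempty := ⟨0, h0r⟩
    have hrmax : (Finset.range (n+1)).max' hrne = n := by
      apply le_antisymm
      · apply Finset.max'_le; intro y hy; simp only [Finset.mem_range] at hy; omega
      · apply Finset.le_max'; simp
    have hmaxs : n = m + C.max' hCne := by
      rw [← hrmax, max'_eq_of hC hrne]
      exact max'_sum hBne hCne
    refine ⟨m, by omega, ?_, h0B, B.max'_mem hBne, ?_⟩
    · intro b hb
      have := Finset.le_max' _ _ hb
      simp only [Finset.mem_range]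
      omega
    · -- gap property
      intro x hxB hxm
      have hamem : x + (n - m) + 1 ∈ Finset.range (n+1) := by
        simp only [Finset.mem_range]; omega
      rw [hC] at hamem
      obtain ⟨b, hb, c, hcC, hbc⟩ := memAdd.mp hamem
      have hc_le : c ≤ n - m := by
        have := Finset.le_max' _ _ hcC
        omega
      refine ⟨b, hb, by omega, by omega⟩
  · rintro ⟨m, hmn, hBsub, h0B, hmB, hgap⟩
    have hcov := cov h0B hBsub hmB (by omega) hgap
    refine ⟨?_, Finset.range (n-m+1), hcov.symm⟩
    intro b hb
    have := hBsub hb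
    simp only [Finset.mem_range] at this ⊢
    omega

lemma Wset_zero (g : ℕ) : Wset g 0 = {{0}} := by
  classical
  ext B
  simp only [Wset, Finset.mem_filter, Finset.mem_powerset, Finset.mem_singleton]
  constructor
  · rintro ⟨hsub, h0, -, -⟩
    apply Finset.Subset.antisymm
    · intro x hx
      have := hsub hx
      simp only [Finset.mem_range] at this
      simp only [Finset.mem_singleton]
      omega
    · intro x hx
      simp only [Finset.mem_singleton] at hx
      subst hx
      exact h0
  · rintro rfl
    refine ⟨by intro x hx; simpa using hx, by simp, by simp, ?_⟩
    intro x hx hlt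
    omega

lemma Wset_succ (g m : ℕ) (hg : 1 ≤ g) :
    Wset g (m+1) = (Finset.Ico (m+1-g) (m+1)).biUnion
      (fun i => (Wset g i).image (insert (m+1))) := by
  classical
  ext B
  simp only [Wset, Finset.mem_filter, Finset.mem_powerset, Finset.mem_biUnion,
    Finset.mem_Ico, Finset.mem_image]
  constructor
  · rintro ⟨hsub, h0, hm1, hgap⟩
    set B' := B.erase (m+1) with hB'
    have h0' : 0 ∈ B' := by
      rw [hB', Finset.mem_erase]; exact ⟨by omega, h0⟩
    have hB'ne : B'.Nonempty := ⟨0, h0'⟩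
    set i := B'.max' hB'ne with hi
    have hiB' : i ∈ B' := B'.max'_mem hB'ne
    have hiB : i ∈ B := Finset.mem_of_mem_erase hiB'
    have hile : i ≤ m := by
      have h1 := hsub hiB
      simp only [Finset.mem_range] at h1
      have : i ≠ m+1 := (Finset.mem_erase.mp hiB').1
      omega
    have hup : ∀ y ∈ B, y ≤ i ∨ y = m+1 := by
      intro y hy
      rcases Nat.lt_or_ge y (m+1) with h | h
      · left
        exact Finset.le_max' _ _ (Finset.mem_erase.mpr ⟨by omega, hy⟩)
      · right
        have := hsub hy
        simp only [Finset.mem_range] at this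
        omega
    have hibound : m+1-g ≤ i := by
      obtain ⟨y, hy, hiy, hyle⟩ := hgap i hiB (by omega)
      rcases hup y hy with h | h
      · omega
      · omega
    refine ⟨i, ⟨hibound, by omega⟩, B', ⟨?_, h0', hiB', ?_⟩, ?_⟩
    · intro x hx
      have := Finset.le_max' _ _ hx
      simp only [Finset.mem_range]
      omega
    · -- gap for B'
      intro x hxB' hxi
      have hxB : x ∈ B := Finset.mem_of_mem_erase hxB'
      obtain ⟨y, hy, hxy, hyle⟩ := hgap x hxB (by omega)
      rcases hup y hy with h | h
      · exact ⟨y, Finset.mem_erase.mpr ⟨by omega, hy⟩, hxy, hyle⟩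
      · refine ⟨i, hiB', by omega, by omega⟩
    · -- insert (m+1) B' = B
      rw [hB', Finset.insert_erase hm1]
  · rintro ⟨i, ⟨hig, him⟩, B', ⟨hsub', h0', hiB', hgap'⟩, rfl⟩
    have hB'bound : ∀ x ∈ B', x ≤ i := by
      intro x hx
      have := hsub' hx
      simp only [Finset.mem_range] at this
      omega
    refine ⟨?_, ?_, by simp, ?_⟩
    · intro x hx
      rcases Finset.mem_insert.mp hx with h | h
      · simp [h]
      · have := hB'bound x h
        simp only [Finset.mem_range]
        omega
    · exact Finset.mem_insert_of_mem h0'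
    · intro x hx hxm
      rcases Finset.mem_insert.mp hx with h | h
      · omega
      · rcases Nat.lt_or_ge x i with hxi | hxi
        · obtain ⟨y, hy, h1, h2⟩ := hgap' x h hxi
          exact ⟨y, Finset.mem_insert_of_mem hy, h1, h2⟩
        · have : x = i := by have := hB'bound x h; omega
          subst this
          exact ⟨m+1, Finset.mem_insert_self _ _, by omega, by omega⟩

lemma Wset_card (g m : ℕ) (hg : 1 ≤ g) : (Wset g m).card = Tc g m := by
  classical
  induction m using Nat.strong_induction_on with
  | _ m ih =>
    match m with
    | 0 => rw [Wset_zero]; simp [Tc]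
    | (m+1) =>
      rw [Wset_succ g m hg, Finset.card_biUnion, Tc_succ]
      · apply Finset.sum_congr rfl
        intro i hi
        simp only [Finset.mem_Ico] at hi
        rw [Finset.card_image_of_injOn, ih i (by omega)]
        intro B1 hB1 B2 hB2 hEq
        simp only [Finset.coe_filter, Set.mem_setOf_eq, Wset, Finset.mem_coe,
          Finset.mem_filter, Finset.mem_powerset] at hB1 hB2
        have hm1 : m+1 ∉ B1 := by
          intro h
          have := hB1.1 h
          simp only [Finset.mem_range] at this
          omega
        have hm2 : m+1 ∉ B2 := by
          intro h
          have := hB2.1 h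
          simp only [Finset.mem_range] at this
          omega
        have := congrArg (fun s => Finset.erase s (m+1)) hEq
        simpa [Finset.erase_insert hm1, Finset.erase_insert hm2] using this
      · intro i hi i' hi' hne
        simp only [Finset.mem_coe, Finset.mem_Ico] at hi hi'
        rw [Function.onFun, Finset.disjoint_left]
        rintro X hX hX'
        obtain ⟨B1, hB1, rfl⟩ := Finset.mem_image.mp hX
        obtain ⟨B2, hB2, hEq⟩ := Finset.mem_image.mp hX'
        simp only [Wset, Finset.mem_filter, Finset.mem_powerset] at hB1 hB2
        have hm1 : m+1 ∉ B1 := fun h => by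
          have := hB1.1 h; simp only [Finset.mem_range] at this; omega
        have hm2 : m+1 ∉ B2 := fun h => by
          have := hB2.1 h; simp only [Finset.mem_range] at this; omega
        have hB12 : B2 = B1 := by
          have := congrArg (fun s => Finset.erase s (m+1)) hEq
          simpa [Finset.erase_insert hm1, Finset.erase_insert hm2] using this
        apply hne
        have h1 : i ≤ i' := by
          have : i ∈ B2 := hB12 ▸ hB1.2.2.1
          have := hB2.1 this
          simp only [Finset.mem_range] at this
          omega
        have h2 : i' ≤ i := by
          have : i' ∈ B1 := hB12 ▸ hB2.2.2.1
          have := hB1.1 this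
          simp only [Finset.mem_range] at this
          omega
        omega

end Interval

section IntervalCount

lemma range_max' (n : ℕ) : (Finset.range (n+1)).max' ⟨0, by simp⟩ = n := by
  apply le_antisymm
  · apply Finset.max'_le; intro y hy; simp only [Finset.mem_range] at hy; omega
  · apply Finset.le_max'; simp

lemma card_divF_interval (n : ℕ) : (DivF n (Finset.range (n+1))).card = Ei n := by
  classical
  rw [divF_interval_char, Finset.card_biUnion]
  · rw [Ei]
    apply Finset.sum_nbij' (i := fun m => n+1-m) (j := fun g => n+1-g)
    · intro m hm
      simp only [Finset.mem_range] at hm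
      simp only [Finset.mem_Icc]
      omega
    · intro g hg
      simp only [Finset.mem_Icc] at hg
      simp only [Finset.mem_range]
      omega
    · intro m hm
      simp only [Finset.mem_range] at hm
      omega
    · intro g hg
      simp only [Finset.mem_Icc] at hg
      omega
    · intro m hm
      simp only [Finset.mem_range] at hm
      rw [Wset_card _ _ (by omega)]
      congr 1 <;> omega
  · intro m hm m' hm' hne
    simp only [Finset.mem_coe, Finset.mem_range] at hm hm'
    rw [Function.onFun, Finset.disjoint_left]
    rintro X hX hX'
    simp only [Wset, Finset.mem_filter, Finset.mem_powerset] at hX hX'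
    apply hne
    have h1 : m ≤ m' := by
      have := hX'.1 hX.2.2.1
      simp only [Finset.mem_range] at this
      omega
    have h2 : m' ≤ m := by
      have := hX.1 hX'.2.2.1
      simp only [Finset.mem_range] at this
      omega
    omega

lemma numDivisors_interval (n : ℕ) : numDivisors (Finset.range (n+1)) = Ei n := by
  have hne : (Finset.range (n+1)).Nonempty := ⟨0, by simp⟩
  rw [numDivisors_eq_card hne (le_of_eq (range_max' n)), card_divF_interval]

lemma Icc_eq_range_add (k : ℕ) : Finset.Icc 1 k = Finset.range k + {1} := by
  ext x
  rw [memAdd]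
  simp only [Finset.mem_Icc, Finset.mem_range, Finset.mem_singleton]
  constructor
  · intro hx
    exact ⟨x - 1, by omega, 1, rfl, by omega⟩
  · rintro ⟨b, hb, c, rfl, rfl⟩
    omega

lemma numDivisors_Icc (k : ℕ) (hk : 1 ≤ k) : numDivisors (Finset.Icc 1 k) = 2 * Ei (k-1) := by
  rw [Icc_eq_range_add, shift_count (by simp only [Finset.mem_range]; omega) 1]
  have : Finset.range k = Finset.range ((k-1)+1) := by congr 1; omega
  rw [this, numDivisors_interval]

end IntervalCount

section Sigma

noncomputable def prevEl (B : Finset ℕ) (x : ℕ) : ℕ := (B.filter (· ≤ x)).sup id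

noncomputable def sigmaF (g : ℕ) (B : Finset ℕ) : Finset ℕ :=
  (Finset.range (B.sup id + 1)).filter (fun x => g ∣ (x - prevEl B x))

variable {B : Finset ℕ}

lemma prev_max {x : ℕ} (b : ℕ) (hb : b ∈ B) (hbx : b ≤ x) : b ≤ prevEl B x :=
  Finset.le_sup (f := id) (by simp [hb, hbx])

lemma prev_mem_le (h0 : 0 ∈ B) (x : ℕ) : prevEl B x ∈ B ∧ prevEl B x ≤ x := by
  have hne : (B.filter (· ≤ x)).Nonempty := ⟨0, by simp [h0]⟩
  obtain ⟨b, hb, hEq⟩ := Finset.exists_mem_eq_sup _ hne id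
  simp only [Finset.mem_filter] at hb
  rw [prevEl, hEq]
  exact ⟨hb.1, hb.2⟩

lemma prev_self (hx : x ∈ B) : prevEl B x = x := by
  apply le_antisymm
  · apply Finset.sup_le
    intro b hb
    simp only [Finset.mem_filter] at hb
    exact hb.2
  · exact prev_max x hx le_rfl

lemma sup_id_eq_max' (h : B.Nonempty) : B.sup id = B.max' h := by
  apply le_antisymm
  · exact Finset.sup_le (fun b hb => Finset.le_max' _ _ hb)
  · exact Finset.le_sup (f := id) (B.max'_mem h)

lemma sup_mem (h0 : 0 ∈ B) : B.sup id ∈ B := by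
  rw [sup_id_eq_max' ⟨0, h0⟩]
  exact B.max'_mem _

lemma sub_sigma (g : ℕ) (h0 : 0 ∈ B) : B ⊆ sigmaF g B := by
  intro x hx
  simp only [sigmaF, Finset.mem_filter, Finset.mem_range]
  refine ⟨?_, ?_⟩
  · have := Finset.le_sup (f := id) hx
    simp only [id] at this
    omega
  · rw [prev_self hx]
    simp

lemma sigma_sup (g : ℕ) (h0 : 0 ∈ B) : (sigmaF g B).sup id = B.sup id := by
  apply le_antisymm
  · apply Finset.sup_le
    intro x hx
    simp only [sigmaF, Finset.mem_filter, Finset.mem_range] at hx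
    simp only [id]
    omega
  · exact Finset.le_sup (f := id) (sub_sigma g h0 (sup_mem h0))

lemma sigma_gap (g : ℕ) (hg : 1 ≤ g) (h0 : 0 ∈ B) :
    GapLE (sigmaF g B) g (B.sup id) := by
  intro x hx hxm
  simp only [sigmaF, Finset.mem_filter, Finset.mem_range] at hx
  obtain ⟨hxr, hdvd⟩ := hx
  have hbprop := prev_mem_le h0 x
  set b := prevEl B x with hbdef
  -- next element of B above x
  have hFne : (B.filter (fun c => x < c)).Nonempty :=
    ⟨B.sup id, by simp only [Finset.mem_filter]; exact ⟨sup_mem h0, hxm⟩⟩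
  set b' := (B.filter (fun c => x < c)).min' hFne with hb'def
  have hb'mem : b' ∈ B ∧ x < b' := by
    have := (B.filter (fun c => x < c)).min'_mem hFne
    rw [← hb'def] at this
    simp only [Finset.mem_filter] at this
    exact this
  rcases le_or_gt b' (x + g) with hcase | hcase
  · exact ⟨b', sub_sigma g h0 hb'mem.1, hb'mem.2, hcase⟩
  · refine ⟨x + g, ?_, by omega, le_rfl⟩
    simp only [sigmaF, Finset.mem_filter, Finset.mem_range]
    have hb'sup : b' ≤ B.sup id := Finset.le_sup (f := id) hb'mem.1
    refine ⟨by omega, ?_⟩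
    have hprev : prevEl B (x + g) = b := by
      apply le_antisymm
      · apply Finset.sup_le
        intro c hc
        simp only [Finset.mem_filter] at hc
        rcases le_or_gt c x with h | h
        · exact prev_max c hc.1 h
        · exfalso
          have : b' ≤ c := Finset.min'_le _ _ (by simp only [Finset.mem_filter]; exact ⟨hc.1, h⟩)
          omega
      · exact prev_max b hbprop.1 (by omega)
    rw [hprev]
    have : x + g - b = (x - b) + g := by omega
    rw [this]
    exact Nat.dvd_add hdvd dvd_rfl

end Sigma

section NormalizedBound

variable {A₀ : Finset ℕ} {M : ℕ}

lemma sigma_into (h0 : 0 ∈ A₀) (hsub : A₀ ⊆ Finset.range (M+1)) (hM : M ∈ A₀) :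
    ∀ B ∈ DivF M A₀, (fun B => sigmaF (M - B.sup id + 1) B) B ∈ DivF M (Finset.range (M+1)) := by
  intro B hB
  simp only [DivF, Finset.mem_filter, Finset.mem_powerset] at hB
  obtain ⟨hBsub, C, hC⟩ := hB
  have h0B : 0 ∈ B := divisor_zero_mem h0 hC
  have hBA : B ⊆ A₀ := divisor_subset h0 hC
  have hmM : B.sup id ≤ M := by
    have := hsub (hBA (sup_mem h0B))
    simp only [Finset.mem_range] at this
    omega
  set m := B.sup id with hm
  set g := M - m + 1 with hgdef
  have hg1 : 1 ≤ g := by omega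
  rw [divF_interval_char]
  rw [Finset.mem_biUnion]
  refine ⟨m, by simp only [Finset.mem_range]; omega, ?_⟩
  simp only [Wset, Finset.mem_filter, Finset.mem_powerset]
  have hssup : (sigmaF g B).sup id = m := sigma_sup g h0B
  refine ⟨?_, sub_sigma g h0B h0B, ?_, ?_⟩
  · intro x hx
    have := Finset.le_sup (f := id) hx
    rw [hssup] at this
    simp only [Finset.mem_range]
    simp only [id] at this
    omega
  · exact sub_sigma g h0B (sup_mem h0B)
  · exact sigma_gap g hg1 h0B

lemma sigma_inj (h0 : 0 ∈ A₀) (hsub : A₀ ⊆ Finset.range (M+1)) (hM : M ∈ A₀) :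
    Set.InjOn (fun B => sigmaF (M - B.sup id + 1) B) (DivF M A₀) := by
  have key : ∀ B1 ∈ DivF M A₀, ∀ B2 ∈ DivF M A₀,
      sigmaF (M - B1.sup id + 1) B1 = sigmaF (M - B2.sup id + 1) B2 →
      ∀ s ∈ B1, s ∈ B2 := by
    intro B1 hB1 B2 hB2 hEq s hs
    by_contra hsB2
    simp only [DivF, Finset.mem_filter, Finset.mem_powerset] at hB1 hB2
    obtain ⟨hB1sub, C1, hC1⟩ := hB1
    obtain ⟨hB2sub, C2, hC2⟩ := hB2
    have h01 : 0 ∈ B1 := divisor_zero_mem h0 hC1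
    have h02 : 0 ∈ B2 := divisor_zero_mem h0 hC2
    have hmeq : B1.sup id = B2.sup id := by
      have e1 := sigma_sup (M - B1.sup id + 1) h01
      have e2 := sigma_sup (M - B2.sup id + 1) h02
      rw [← e1, ← e2, hEq]
    set m := B2.sup id with hmdef
    set g := M - m + 1 with hgdef
    have hmM : m ≤ M := by
      have := hsub (divisor_subset h0 hC2 (sup_mem h02))
      simp only [Finset.mem_range] at this
      omega
    -- s ∈ sigma of B2
    have hsσ : s ∈ sigmaF g B2 := by
      rw [← hEq, hmeq]
      exact sub_sigma g h01 hs
    simp only [sigmaF, Finset.mem_filter, Finset.mem_range] at hsσ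
    obtain ⟨hsr, hdvd⟩ := hsσ
    have hbprop := prev_mem_le h02 s
    set b := prevEl B2 s with hbdef
    have hbs : b < s := by
      rcases Nat.lt_or_ge b s with h | h
      · exact h
      · exfalso
        have : b = s := by omega
        rw [this] at hbprop
        exact hsB2 hbprop.1
    have hsb_ge : g ≤ s - b := Nat.le_of_dvd (by omega) hdvd
    -- s ∈ A₀ and covering by B2 + C2
    have hsA : s ∈ A₀ := divisor_subset h0 hC1 hs
    rw [hC2] at hsA
    obtain ⟨b2, hb2, c2, hc2, hbc⟩ := memAdd.mp hsA
    -- c2 ≤ M - m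
    have hB2ne : B2.Nonempty := ⟨0, h02⟩
    have hC2ne : C2.Nonempty := sum_nonempty_right (by rw [← hC2]; exact ⟨0, h0⟩)
    have hA0max : A₀.max' ⟨0, h0⟩ = M := by
      apply le_antisymm
      · have := hsub (A₀.max'_mem ⟨0, h0⟩)
        simp only [Finset.mem_range] at this
        omega
      · exact Finset.le_max' _ _ hM
    have hmax_eq : M = B2.max' hB2ne + C2.max' hC2ne := by
      rw [← hA0max, max'_eq_of hC2 ⟨0, h0⟩]
      exact max'_sum hB2ne hC2ne
    have hB2max : B2.max' hB2ne = m := (sup_id_eq_max' hB2ne).symm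
    have hc2le : c2 ≤ M - m := by
      have := Finset.le_max' _ _ hc2
      omega
    -- b2 ∈ (s - g, s] but all B2 elements ≤ s are ≤ b ≤ s - g
    have : b2 ≤ b := prev_max b2 hb2 (by omega)
    omega
  intro B1 hB1 B2 hB2 hEq
  simp only [Finset.mem_coe] at hB1 hB2
  apply Finset.Subset.antisymm
  · exact fun s hs => key B1 hB1 B2 hB2 hEq s hs
  · exact fun s hs => key B2 hB2 B1 hB1 hEq.symm s hs


/-- main injection bound: a normalized set has at most as many divisors as the interval -/
lemma normalized_le (h0 : 0 ∈ A₀) (hsub : A₀ ⊆ Finset.range (M+1)) (hM : M ∈ A₀) :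
    numDivisors A₀ ≤ Ei M := by
  classical
  have hA₀ : A₀.Nonempty := ⟨0, h0⟩
  have hmaxle : A₀.max' hA₀ ≤ M := by
    have := hsub (A₀.max'_mem hA₀)
    simp only [Finset.mem_range] at this
    omega
  rw [numDivisors_eq_card hA₀ hmaxle, ← card_divF_interval M]
  exact Finset.card_le_card_of_injOn _ (sigma_into h0 hsub hM) (sigma_inj h0 hsub hM)

lemma sup_id_range (n : ℕ) : (Finset.range (n+1)).sup id = n := by
  rw [sup_id_eq_max' ⟨0, by simp⟩, range_max']

lemma normalized_lt (h0 : 0 ∈ A₀) (hsub : A₀ ⊆ Finset.range (M+1)) (hM : M ∈ A₀)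
    (hne : A₀ ≠ Finset.range (M+1)) :
    numDivisors A₀ + 1 ≤ Ei M := by
  classical
  have hA₀ : A₀.Nonempty := ⟨0, h0⟩
  have hmaxle : A₀.max' hA₀ ≤ M := by
    have := hsub (A₀.max'_mem hA₀)
    simp only [Finset.mem_range] at this
    omega
  rw [numDivisors_eq_card hA₀ hmaxle, ← card_divF_interval M]
  obtain ⟨j, hjr, hjA⟩ := Finset.exists_of_ssubset (ssubset_of_subset_of_ne hsub hne)
  simp only [Finset.mem_range] at hjr
  have hj0 : 0 < j := by
    rcases Nat.eq_zero_or_pos j with h | h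
    · exact absurd (h ▸ h0) hjA
    · exact h
  have hjM : j < M := by
    rcases Nat.lt_or_ge j M with h | h
    · exact h
    · exfalso
      have : j = M := by omega
      exact hjA (this ▸ hM)
  set R := Finset.range (j+1) with hR
  have hRmem : R ∈ DivF M (Finset.range (M+1)) := by
    rw [divF_interval_char, Finset.mem_biUnion]
    refine ⟨j, by simp only [Finset.mem_range]; omega, ?_⟩
    simp only [Wset, Finset.mem_filter, Finset.mem_powerset]
    rw [hR]
    refine ⟨Finset.Subset.refl _, by simp, by simp, ?_⟩
    intro x hx hxj
    exact ⟨x+1, by simp only [Finset.mem_range]; omega, by omega, by omega⟩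
  have hRnot : R ∉ (DivF M A₀).image (fun B => sigmaF (M - B.sup id + 1) B) := by
    rw [Finset.mem_image]
    rintro ⟨B, hB, hEq⟩
    simp only [DivF, Finset.mem_filter, Finset.mem_powerset] at hB
    obtain ⟨hBsub, C, hC⟩ := hB
    have h0B : 0 ∈ B := divisor_zero_mem h0 hC
    have hsupB : B.sup id = j := by
      have e1 := sigma_sup (M - B.sup id + 1) h0B
      rw [hEq] at e1
      rw [← e1, hR, sup_id_range]
    have hg2 : 2 ≤ M - B.sup id + 1 := by omega
    have hall : ∀ x : ℕ, x ≤ j → x ∈ B := by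
      intro x
      induction x with
      | zero => intro _; exact h0B
      | succ x ih =>
        intro hxj
        have hxB : x ∈ B := ih (by omega)
        by_contra hx1B
        have hmem : x + 1 ∈ sigmaF (M - B.sup id + 1) B := by
          rw [hEq, hR]
          simp only [Finset.mem_range]
          omega
        simp only [sigmaF, Finset.mem_filter, Finset.mem_range] at hmem
        obtain ⟨-, hdvd⟩ := hmem
        have hbp := prev_mem_le h0B (x+1)
        have hlow : x ≤ prevEl B (x+1) := prev_max x hxB (by omega)
        have hbe : prevEl B (x+1) = x := by
          rcases Nat.lt_or_ge (prevEl B (x+1)) (x+1) with h | h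
          · omega
          · exfalso
            have : prevEl B (x+1) = x+1 := by omega
            rw [this] at hbp
            exact hx1B hbp.1
        rw [hbe] at hdvd
        simp only [Nat.add_sub_cancel_left] at hdvd
        have := Nat.le_of_dvd (by omega) hdvd
        omega
    have : j ∈ B := hall j le_rfl
    exact hjA (divisor_subset h0 hC this)
  have hins : insert R ((DivF M A₀).image (fun B => sigmaF (M - B.sup id + 1) B))
      ⊆ DivF M (Finset.range (M+1)) := by
    intro X hX
    rcases Finset.mem_insert.mp hX with h | h
    · exact h ▸ hRmem
    · obtain ⟨B, hB, rfl⟩ := Finset.mem_image.mp h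
      exact sigma_into h0 hsub hM B hB
  have hcard := Finset.card_le_card hins
  rw [Finset.card_insert_of_notMem hRnot,
    Finset.card_image_of_injOn (sigma_inj h0 hsub hM)] at hcard
  omega

end NormalizedBound

section Assembly

lemma main_bound (k : ℕ) (hk : 1 ≤ k) (A : Finset ℕ) (hA : A.Nonempty)
    (hAsub : A ⊆ Finset.range (k+1)) :
    numDivisors A ≤ 2 * Ei (k-1) ∧
      (numDivisors A = 2 * Ei (k-1) → k ≠ 1 → k ≠ 3 → A = Finset.Icc 1 k) := by
  classical
  set t := A.min' hA with ht
  have htk : t ≤ k := by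
    have := hAsub (A.min'_mem hA)
    simp only [Finset.mem_range] at this
    omega
  have hmaxk : A.max' hA ≤ k := by
    have := hAsub (A.max'_mem hA)
    simp only [Finset.mem_range] at this
    omega
  have htmax : t ≤ A.max' hA := Finset.min'_le _ _ (A.max'_mem hA)
  set A₀ := A.image (· - t) with hA₀
  set M₀ := A.max' hA - t with hM₀
  have h0 : 0 ∈ A₀ := by
    rw [hA₀]
    exact Finset.mem_image.mpr ⟨t, A.min'_mem hA, by omega⟩
  have hM₀mem : M₀ ∈ A₀ := by
    rw [hA₀]
    exact Finset.mem_image.mpr ⟨A.max' hA, A.max'_mem hA, rfl⟩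
  have hA₀sub : A₀ ⊆ Finset.range (M₀+1) := by
    intro x hx
    obtain ⟨a, ha, rfl⟩ := Finset.mem_image.mp hx
    have := Finset.le_max' _ _ ha
    simp only [Finset.mem_range]
    omega
  have hAt : A₀ + {t} = A := image_sub_add (fun b hb => Finset.min'_le _ _ hb)
  have hsplit : numDivisors A = (t+1) * numDivisors A₀ := by
    rw [← hAt]
    exact shift_count h0 t
  have hnorm : numDivisors A₀ ≤ Ei M₀ := normalized_le h0 hA₀sub hM₀mem
  have hM₀k : M₀ ≤ k - t := by omega
  have hEmono : Ei M₀ ≤ Ei (k - t) := Ei_mono hM₀k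
  have hle : numDivisors A ≤ (t+1) * Ei (k-t) := by
    calc numDivisors A = (t+1) * numDivisors A₀ := hsplit
      _ ≤ (t+1) * Ei M₀ := Nat.mul_le_mul_left _ hnorm
      _ ≤ (t+1) * Ei (k-t) := Nat.mul_le_mul_left _ hEmono
  have hfinal : (t+1) * Ei (k-t) ≤ 2 * Ei (k-1) := by
    rcases Nat.eq_zero_or_pos t with h | htpos
    · rw [h]
      have hl := LE3 (k-1)
      have e : k - 1 + 1 = k := by omega
      rw [e] at hl
      simpa using hl
    · exact chain k t htpos htk
  constructor
  · exact hle.trans hfinal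
  · intro hEqual hk1 hk3
    have hk2 : 2 ≤ k := by omega
    -- rule out t = 0
    have ht0 : t ≠ 0 := by
      rintro h
      rw [h] at hle
      simp only [Nat.zero_add, one_mul, Nat.sub_zero] at hle
      have h2 := LE3s (k-1) (by omega)
      have e : k - 1 + 1 = k := by omega
      rw [e] at h2
      omega
    -- rule out t = 2
    have ht2 : t ≠ 2 := by
      rintro h
      rw [h] at hle
      have h2 := LE2s (k-2) (by omega)
      have e : k - 2 + 1 = k - 1 := by omega
      rw [e] at h2
      have h3 : (2+1) * Ei (k-2) = 3 * Ei (k-2) := by norm_num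
      rw [h3] at hle
      omega
    -- rule out t ≥ 3
    have ht3 : t < 3 := by
      by_contra h
      have hcs := chain_strict k t (by omega) htk
      obtain ⟨P, hP⟩ : ∃ P, (t+1) * Ei (k-t) = P := ⟨_, rfl⟩
      rw [hP] at hle hcs
      omega
    have ht1 : t = 1 := by omega
    -- now t = 1
    rw [ht1] at hsplit
    have h2 : (1+1) * numDivisors A₀ = 2 * numDivisors A₀ := by norm_num
    rw [h2] at hsplit
    have hnd : numDivisors A₀ = Ei (k-1) := by omega
    have hM₀eq : M₀ = k - 1 := by
      by_contra h
      have hlt : M₀ < k - 1 := by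
        have := hM₀k
        rw [ht1] at this
        omega
      have h1 : Ei M₀ + 1 ≤ Ei (k-1) := by
        calc Ei M₀ + 1 ≤ Ei (M₀ + 1) := LE1 M₀
          _ ≤ Ei (k-1) := Ei_mono (by omega)
      omega
    have hA₀eq : A₀ = Finset.range (M₀+1) := by
      by_contra h
      have := normalized_lt h0 hA₀sub hM₀mem h
      rw [hM₀eq] at this
      omega
    rw [← hAt, hA₀eq, hM₀eq, ht1]
    have e : k - 1 + 1 = k := by omega
    rw [e, ← Icc_eq_range_add]

end Assembly

theorem stmt15 (k : ℕ) (hk : 1 ≤ k) :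
    (∀ A : Finset ℕ, A.Nonempty → A ⊆ Finset.range (k + 1) →
        numDivisors A ≤ numDivisors (Finset.Icc 1 k)) ∧
      (k ≠ 1 → k ≠ 3 →
        ∀ A : Finset ℕ, A.Nonempty → A ⊆ Finset.range (k + 1) →
          numDivisors A = numDivisors (Finset.Icc 1 k) → A = Finset.Icc 1 k) := by
  have hIcc := numDivisors_Icc k hk
  constructor
  · intro A hA hAsub
    rw [hIcc]
    exact (main_bound k hk A hA hAsub).1
  · intro hk1 hk3 A hA hAsub hEq
    rw [hIcc] at hEq
    exact (main_bound k hk A hA hAsub).2 hEq hk1 hk3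
end

section
/- Among all 0-rooted subsets A of ℕ with max(A) ≤ k (i.e., min(A) = 0 and A ⊆ {0,...,k}), the full interval {0,1,...,k} is the unique maximizer of the number of sumset divisors d(A). -/
open Pointwise

/-- If `0 ∈ B + C` then `0 ∈ B` and `0 ∈ C`. -/
lemma zero_mem_of_add {B C : Finset ℕ} (h : (0 : ℕ) ∈ B + C) : 0 ∈ B ∧ 0 ∈ C := by
  obtain ⟨b, hb, c, hc, hbc⟩ := Finset.mem_add.1 h
  obtain ⟨rfl, rfl⟩ : b = 0 ∧ c = 0 := by omega
  exact ⟨hb, hc⟩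

/-- Sums of intervals of naturals. -/
lemma range_add_range (a b : ℕ) :
    Finset.range (a + 1) + Finset.range (b + 1) = Finset.range (a + b + 1) := by
  ext x
  simp only [Finset.mem_add, Finset.mem_range]
  constructor
  · rintro ⟨y, hy, z, hz, rfl⟩; omega
  · intro hx
    exact ⟨min x a, by omega, x - min x a, by omega, by omega⟩

/-- Any divisor of a `0`-rooted set is a subset containing `0`. -/
lemma divisor_subset_s16 {A B C : Finset ℕ} (h0 : 0 ∈ A) (hA : A = B + C) :
    B ⊆ A ∧ 0 ∈ B := by
  have h0' : (0 : ℕ) ∈ B + C := hA ▸ h0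
  obtain ⟨h0B, h0C⟩ := zero_mem_of_add h0'
  refine ⟨fun b hb => ?_, h0B⟩
  rw [hA]
  exact Finset.mem_add.2 ⟨b, hb, 0, h0C, by omega⟩

/-- The key construction: if `A = B + C`, then `B ∪ ([0, max B] \ A)` is a divisor of
`[0, k]`. -/
lemma key (k : ℕ) (A B C : Finset ℕ) (h0 : 0 ∈ A) (hsub : A ⊆ Finset.range (k + 1))
    (hA : A = B + C) :
    Finset.range (k + 1) =
      (B ∪ (Finset.range (B.sup id + 1) \ A)) + Finset.range (k - B.sup id + 1) := by
  obtain ⟨hBA, h0B⟩ := divisor_subset_s16 h0 hA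
  set m := B.sup id with hm
  obtain ⟨b₀, hb₀, hb₀m⟩ := Finset.exists_mem_eq_sup B ⟨0, h0B⟩ id
  have hmB : m ∈ B := by rw [hm, hb₀m]; exact hb₀
  have hmk : m ≤ k := by
    have := hsub (hBA hmB)
    simpa [Finset.mem_range] using Nat.lt_succ_iff.1 (Finset.mem_range.1 this)
  -- every element of C is at most k - m
  have hC : ∀ c ∈ C, c ≤ k - m := by
    intro c hc
    have : m + c ∈ A := by
      rw [hA]; exact Finset.mem_add.2 ⟨m, hmB, c, hc, rfl⟩
    have := Finset.mem_range.1 (hsub this)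
    omega
  ext x
  simp only [Finset.mem_add, Finset.mem_union, Finset.mem_sdiff, Finset.mem_range]
  constructor
  · intro hx
    by_cases hxm : m ≤ x
    · exact ⟨m, Or.inl hmB, x - m, by omega, by omega⟩
    · by_cases hxA : x ∈ A
      · rw [hA] at hxA
        obtain ⟨b, hb, c, hc, rfl⟩ := Finset.mem_add.1 hxA
        exact ⟨b, Or.inl hb, c, by have := hC c hc; omega, rfl⟩
      · exact ⟨x, Or.inr ⟨by omega, hxA⟩, 0, by omega, by omega⟩
  · rintro ⟨y, hy, c, hc, rfl⟩
    have hym : y ≤ m := by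
      rcases hy with hy | ⟨hy, _⟩
      · exact Finset.le_sup (f := id) hy
      · omega
    omega

theorem stmt16 (k : ℕ) (A : Finset ℕ) (h0 : 0 ∈ A) (hsub : A ⊆ Finset.range (k + 1)) :
    numDivisors A ≤ numDivisors (Finset.range (k + 1)) ∧
      (A ≠ Finset.range (k + 1) →
        numDivisors A < numDivisors (Finset.range (k + 1))) := by
  classical
  set DA : Set (Finset ℕ) := {B : Finset ℕ | ∃ C : Finset ℕ, A = B + C} with hDA
  set DF : Set (Finset ℕ) := {B : Finset ℕ | ∃ C : Finset ℕ, Finset.range (k + 1) = B + C}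
    with hDF
  have h0F : (0 : ℕ) ∈ Finset.range (k + 1) := by simp
  -- DF is finite
  have hDFfin : DF.Finite := by
    apply Set.Finite.subset (Finset.finite_toSet ((Finset.range (k + 1)).powerset))
    rintro B ⟨C, hC⟩
    simp only [Finset.coe_powerset, Set.mem_preimage, Set.mem_powerset_iff,
      Finset.coe_subset]
    exact (divisor_subset_s16 h0F hC).1
  set f : Finset ℕ → Finset ℕ := fun B => B ∪ (Finset.range (B.sup id + 1) \ A) with hf
  -- f maps DA into DF
  have hmaps : ∀ B ∈ DA, f B ∈ DF := by
    rintro B ⟨C, hC⟩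
    exact ⟨Finset.range (k - B.sup id + 1), key k A B C h0 hsub hC⟩
  -- f B ∩ A = B for B ∈ DA, hence f is injective on DA
  have hinter : ∀ B ∈ DA, f B ∩ A = B := by
    rintro B ⟨C, hC⟩
    have hBA := (divisor_subset_s16 h0 hC).1
    rw [hf]
    ext x
    simp only [Finset.mem_inter, Finset.mem_union, Finset.mem_sdiff, Finset.mem_range]
    constructor
    · rintro ⟨hx | ⟨_, hx⟩, hxA⟩
      · exact hx
      · exact absurd hxA hx
    · intro hx
      exact ⟨Or.inl hx, hBA hx⟩
  have hinj : Set.InjOn f DA := by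
    intro B₁ h₁ B₂ h₂ heq
    have := hinter B₁ h₁
    rw [heq, hinter B₂ h₂] at this
    exact this.symm
  have hle : numDivisors A ≤ numDivisors (Finset.range (k + 1)) :=
    Set.ncard_le_ncard_of_injOn f hmaps hinj hDFfin
  refine ⟨hle, fun hne => ?_⟩
  -- strictness: find j ∈ [0,k] \ A
  obtain ⟨j, hjk, hjA⟩ : ∃ j, j ∈ Finset.range (k + 1) ∧ j ∉ A := by
    by_contra h
    push_neg at h
    exact hne (Finset.Subset.antisymm hsub h)
  have hjk' : j ≤ k := by have := Finset.mem_range.1 hjk; omega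
  -- the witness divisor of [0,k] not in the image of f
  set D : Finset ℕ := Finset.range (j + 1) with hD
  have hDmem : D ∈ DF := by
    refine ⟨Finset.range (k - j + 1), ?_⟩
    rw [hD, range_add_range]
    congr 1
    omega
  have hDnot : D ∉ f '' DA := by
    rintro ⟨B, hBmem, hfB⟩
    obtain ⟨C, hC⟩ := hBmem
    obtain ⟨hBA, h0B⟩ := divisor_subset_s16 h0 hC
    set m := B.sup id with hm
    obtain ⟨b₀, hb₀, hb₀m⟩ := Finset.exists_mem_eq_sup B ⟨0, h0B⟩ id
    have hmB : m ∈ B := by rw [hm, hb₀m]; exact hb₀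
    -- m ∈ f B = D so m ≤ j; j ∈ D = f B so j ≤ m
    have hmD : m ∈ D := by
      rw [← hfB, hf]
      exact Finset.mem_union_left _ hmB
    have hmj : m ≤ j := by have := Finset.mem_range.1 (hD ▸ hmD); omega
    have hjfB : j ∈ f B := by
      rw [hfB, hD]
      exact Finset.mem_range.2 (by omega)
    have hjm : j ≤ m := by
      rcases Finset.mem_union.1 hjfB with h | h
      · exact Finset.le_sup (f := id) h
      · have := Finset.mem_range.1 (Finset.mem_sdiff.1 h).1; omega
    have : m = j := le_antisymm hmj hjm
    exact hjA (this ▸ hBA hmB)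
  have hssub : f '' DA ⊂ DF := by
    refine ⟨?_, fun hsup => hDnot (hsup hDmem)⟩
    rintro x ⟨B, hB, rfl⟩
    exact hmaps B hB
  calc numDivisors A = (f '' DA).ncard := (Set.ncard_image_of_injOn hinj).symm
    _ < DF.ncard := Set.ncard_lt_ncard hssub hDFfin
    _ = numDivisors (Finset.range (k + 1)) := rfl
end

section
/- Let H(n,m) denote the number of headstrong compositions of n with exactly m parts. Then H(n,m) = 0 for m > n, H(n,n) = 1, H(n,1) = 1, and for n > m > 1, H(n,m) = Σ_{j=1}^{n-m} H(n-m, j) · C(m-1, j-1), where C denotes the binomial coefficient. -/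
namespace HS


def p : ℕ → Bool := fun x => decide (2 ≤ x)

lemma p_true {x : ℕ} (h : 2 ≤ x) : p x = true := by simp [p, h]
lemma p_false {x : ℕ} (h : x < 2) : p x = false := by simp [p]; omega

def merge : List Bool → List ℕ → List ℕ
  | [], _ => []
  | true :: b, x :: t => (x + 1) :: merge b t
  | true :: b, [] => 1 :: merge b []
  | false :: b, t => 1 :: merge b t

@[simp] lemma merge_length (b : List Bool) (t : List ℕ) : (merge b t).length = b.length := by
  induction b generalizing t with
  | nil => rfl
  | cons hd tl ih => cases hd <;> cases t <;> simp [merge, ih]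

lemma merge_sum (b : List Bool) (t : List ℕ) (h : b.count true = t.length) :
    (merge b t).sum = t.sum + b.length := by
  induction b generalizing t with
  | nil =>
    simp only [List.count_nil] at h
    simp [merge, (List.length_eq_zero_iff.mp h.symm)]
  | cons hd tl ih =>
    cases hd with
    | true =>
      cases t with
      | nil => simp at h
      | cons x t =>
        simp only [List.count_cons_self, List.length_cons] at h
        simp only [merge, List.sum_cons, List.length_cons, ih t (by omega)]
        omega
    | false =>
      rw [List.count_cons_of_ne (by simp)] at h
      simp only [merge, List.sum_cons, List.length_cons, ih t h]
      omega

lemma merge_bounds {c : ℕ} {t : List ℕ} (ht : ∀ y ∈ t, y ≤ c) (b : List Bool) :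
    ∀ x ∈ merge b t, 0 < x ∧ x ≤ c + 1 := by
  induction b generalizing t with
  | nil => simp [merge]
  | cons hd tl ih =>
    cases hd with
    | true =>
      cases t with
      | nil =>
        intro x hx
        simp only [merge, List.mem_cons] at hx
        rcases hx with rfl | hx
        · omega
        · exact ih (by simp) x hx
      | cons y t =>
        intro x hx
        simp only [merge, List.mem_cons] at hx
        rcases hx with rfl | hx
        · have := ht y (by simp); omega
        · exact ih (fun z hz => ht z (by simp [hz])) x hx
    | false =>
      intro x hx
      simp only [merge, List.mem_cons] at hx
      rcases hx with rfl | hx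
      · omega
      · exact ih ht x hx

lemma merge_map {b : List Bool} {t : List ℕ} (h : b.count true = t.length)
    (hpos : ∀ y ∈ t, 0 < y) : (merge b t).map p = b := by
  induction b generalizing t with
  | nil => simp [merge]
  | cons hd tl ih =>
    cases hd with
    | true =>
      cases t with
      | nil => simp at h
      | cons x t =>
        simp only [List.count_cons_self, List.length_cons] at h
        have hx := hpos x (by simp)
        simp only [merge, List.map_cons,
          ih (t := t) (by omega) (fun z hz => hpos z (by simp [hz]))]
        rw [p_true (by omega)]
    | false =>
      rw [List.count_cons_of_ne (by simp)] at h
      simp only [merge, List.map_cons, ih (t := t) h hpos]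
      rw [p_false (by omega)]

lemma merge_filter {b : List Bool} {t : List ℕ} (h : b.count true = t.length)
    (hpos : ∀ y ∈ t, 0 < y) : (merge b t).filter p = t.map (· + 1) := by
  induction b generalizing t with
  | nil =>
    simp only [List.count_nil] at h
    simp [merge, (List.length_eq_zero_iff.mp h.symm)]
  | cons hd tl ih =>
    cases hd with
    | true =>
      cases t with
      | nil => simp at h
      | cons x t =>
        simp only [List.count_cons_self, List.length_cons] at h
        have hx := hpos x (by simp)
        simp only [merge, List.map_cons]
        rw [List.filter_cons_of_pos (p_true (by omega)),
          ih (t := t) (by omega) (fun z hz => hpos z (by simp [hz]))]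
    | false =>
      rw [List.count_cons_of_ne (by simp)] at h
      simp only [merge]
      rw [List.filter_cons_of_neg (by rw [p_false (by omega)]; simp),
        ih (t := t) h hpos]

lemma merge_recover (t' : List ℕ) (h : ∀ x ∈ t', 0 < x) :
    merge (t'.map p) ((t'.filter p).map (· - 1)) = t' := by
  induction t' with
  | nil => rfl
  | cons x t ih =>
    have hx := h x (by simp)
    have ih' := ih (fun z hz => h z (by simp [hz]))
    by_cases h2 : 2 ≤ x
    · rw [List.map_cons, p_true h2, List.filter_cons_of_pos (p_true h2), List.map_cons]
      show (x - 1 + 1) :: merge (t.map p) ((t.filter p).map (· - 1)) = x :: t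
      rw [ih']
      congr 1
      omega
    · have hx1 : x = 1 := by omega
      rw [List.map_cons, p_false (by omega),
        List.filter_cons_of_neg (by rw [p_false (by omega)]; simp)]
      show 1 :: merge (t.map p) ((t.filter p).map (· - 1)) = x :: t
      rw [ih', hx1]

lemma count_true_map (t : List ℕ) : (t.map p).count true = t.countP p := by
  induction t with
  | nil => rfl
  | cons x t ih =>
    simp only [List.map_cons, List.count_cons, List.countP_cons, ih]
    cases hp : p x <;> simp [hp]



lemma ncard_prod {α β : Type*} (s : Set α) (t : Set β) :
    (s ×ˢ t).ncard = s.ncard * t.ncard := by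
  have := Nat.card_congr (Equiv.Set.prod s t)
  simpa [← Nat.card_coe_set_eq, Nat.card_prod] using this

lemma ncard_biUnion {ι α : Type*} (s : Finset ι) (f : ι → Set α)
    (hf : ∀ i ∈ s, (f i).Finite)
    (hd : ∀ i ∈ s, ∀ j ∈ s, i ≠ j → Disjoint (f i) (f j)) :
    (⋃ i ∈ s, f i).ncard = ∑ i ∈ s, (f i).ncard := by
  classical
  induction s using Finset.induction with
  | empty => simp
  | @insert a s ha ih =>
    rw [Finset.sum_insert ha, Finset.set_biUnion_insert,
      Set.ncard_union_eq ?_ (hf a (by simp)) ?_,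
      ih (fun i hi => hf i (by simp [hi])) (fun i hi j hj => hd i (by simp [hi]) j (by simp [hj]))]
    · rw [Set.disjoint_iUnion_right]
      intro i
      rw [Set.disjoint_iUnion_right]
      intro hi
      exact hd a (by simp) i (by simp [Finset.mem_coe.mp hi])
        (by rintro rfl; exact ha (Finset.mem_coe.mp hi))
    · exact Set.Finite.biUnion s.finite_toSet
        (fun i hi => hf i (by simp [Finset.mem_coe.mp hi]))

def B (k c : ℕ) : Set (List Bool) := {b | b.length = k ∧ b.count true = c}

lemma B_finite (k c : ℕ) : (B k c).Finite :=
  Set.Finite.subset (List.finite_length_eq Bool k) (fun _ h => h.1)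

lemma B_card (k c : ℕ) : (B k c).ncard = k.choose c := by
  induction k generalizing c with
  | zero =>
    cases c with
    | zero =>
      have : B 0 0 = {([] : List Bool)} := by
        ext b
        constructor
        · rintro ⟨h1, -⟩
          exact List.length_eq_zero_iff.mp h1
        · rintro rfl; exact ⟨rfl, rfl⟩
      rw [this, Set.ncard_singleton, Nat.choose_self]
    | succ c =>
      have : B 0 (c + 1) = ∅ := by
        ext b
        simp only [Set.mem_empty_iff_false, iff_false]
        rintro ⟨h1, h2⟩
        rw [List.length_eq_zero_iff.mp h1] at h2
        simp at h2
      simp [this]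
  | succ k ih =>
    have hsplit : B (k + 1) c =
        (List.cons true '' {b ∈ B k (c - 1) | 1 ≤ c}) ∪ (List.cons false '' B k c) := by
      ext b
      constructor
      · rintro ⟨h1, h2⟩
        cases b with
        | nil => simp at h1
        | cons hd tl =>
          cases hd with
          | true =>
            left
            refine ⟨tl, ⟨⟨by simpa using h1, ?_⟩, ?_⟩, rfl⟩
            · simp only [List.count_cons_self] at h2; omega
            · simp only [List.count_cons_self] at h2; omega
          | false =>
            right
            refine ⟨tl, ⟨by simpa using h1, ?_⟩, rfl⟩
            rw [List.count_cons_of_ne (by simp)] at h2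
            exact h2
      · rintro (⟨tl, ⟨⟨h1, h2⟩, hc⟩, rfl⟩ | ⟨tl, ⟨h1, h2⟩, rfl⟩)
        · exact ⟨by simp [h1], by simp only [List.count_cons_self]; omega⟩
        · exact ⟨by simp [h1], by rw [List.count_cons_of_ne (by simp)]; exact h2⟩
    rw [hsplit, Set.ncard_union_eq ?_ ?_ ?_,
      Set.ncard_image_of_injective _ (List.cons_injective),
      Set.ncard_image_of_injective _ (List.cons_injective)]
    · cases c with
      | zero =>
        have : {b ∈ B k (0 - 1) | 1 ≤ (0:ℕ)} = ∅ := by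
          ext b; simp
        rw [this]
        simp [ih]
      | succ c =>
        have : {b ∈ B k (c + 1 - 1) | 1 ≤ c + 1} = B k c := by
          ext b; simp
        rw [this, ih, ih, Nat.choose_succ_succ, Nat.add_comm]
    · rw [Set.disjoint_left]
      rintro x ⟨tl, -, rfl⟩ ⟨tl', -, h⟩
      simp at h
    · exact Set.Finite.image _ (Set.Finite.subset (B_finite k (c-1)) (fun _ h => h.1))
    · exact Set.Finite.image _ (B_finite k c)




def S (n m : ℕ) : Set (List ℕ) :=
  {l | l.sum = n ∧ l.length = m ∧ (∀ x ∈ l, 0 < x) ∧ ∀ x ∈ l, x ≤ l.headI}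

lemma length_le_sum (l : List ℕ) (h : ∀ x ∈ l, 0 < x) : l.length ≤ l.sum := by
  induction l with
  | nil => simp
  | cons x t ih =>
    have := h x (by simp)
    have := ih (fun z hz => h z (by simp [hz]))
    simp only [List.length_cons, List.sum_cons]
    omega

lemma sum_map_pred (t : List ℕ) (h : ∀ x ∈ t, 0 < x) :
    (t.map (· - 1)).sum + t.length = t.sum := by
  induction t with
  | nil => simp
  | cons x t ih =>
    have := h x (by simp)
    have := ih (fun z hz => h z (by simp [hz]))
    simp only [List.map_cons, List.sum_cons, List.length_cons]
    omega

lemma sum_filter_split (l : List ℕ) :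
    l.sum = (l.filter p).sum + (l.filter (fun x => !p x)).sum := by
  induction l with
  | nil => rfl
  | cons x t ih =>
    cases hp : p x <;>
      simp [List.filter_cons, hp, ih] <;> omega

lemma sum_filter_not_eq_length (l : List ℕ) (h : ∀ x ∈ l, 0 < x) :
    (l.filter (fun x => !p x)).sum = (l.filter (fun x => !p x)).length := by
  induction l with
  | nil => rfl
  | cons x t ih =>
    have hx := h x (by simp)
    have ih' := ih (fun z hz => h z (by simp [hz]))
    cases hp : p x with
    | true => simpa [List.filter_cons, hp] using ih'
    | false =>
      have hx1 : x = 1 := by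
        have : ¬ 2 ≤ x := by simpa [p] using hp
        omega
      subst hx1
      simp [List.filter_cons, hp, ih']
      omega

lemma length_filter_split (l : List ℕ) :
    l.length = (l.filter p).length + (l.filter (fun x => !p x)).length := by
  induction l with
  | nil => rfl
  | cons x t ih => cases hp : p x <;> simp [List.filter_cons, hp, ih] <;> omega

lemma finite_bounded (m n : ℕ) : {l : List ℕ | l.length = m ∧ ∀ x ∈ l, x ≤ n}.Finite := by
  have hfin := List.finite_length_eq (Fin (n + 1)) m
  apply Set.Finite.subset (hfin.image (List.map Fin.val))
  rintro l ⟨hl, hb⟩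
  refine ⟨l.map (fun x => (⟨min x n, by omega⟩ : Fin (n + 1))), by simp [hl], ?_⟩
  rw [List.map_map]
  conv_rhs => rw [← List.map_id l]
  apply List.map_congr_left
  intro x hx
  have := hb x hx
  simp [Nat.min_eq_left this]

lemma S_finite (n m : ℕ) : (S n m).Finite := by
  apply Set.Finite.subset (finite_bounded m n)
  rintro l ⟨h1, h2, h3, -⟩
  exact ⟨h2, fun x hx => h1 ▸ List.single_le_sum (fun _ _ => Nat.zero_le _) x hx⟩

lemma S_empty {n m : ℕ} (h : n < m) : S n m = ∅ := by
  ext l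
  simp only [Set.mem_empty_iff_false, iff_false]
  rintro ⟨h1, h2, h3, -⟩
  have := length_le_sum l h3
  omega

lemma all_one (l : List ℕ) (h : ∀ x ∈ l, 0 < x) (hs : l.sum = l.length) : ∀ x ∈ l, x = 1 := by
  induction l with
  | nil => simp
  | cons x t ih =>
    have hx := h x (by simp)
    have hpos := fun z hz => h z (List.mem_cons_of_mem _ hz)
    have hle := length_le_sum t hpos
    simp only [List.sum_cons, List.length_cons] at hs
    have hx1 : x = 1 := by omega
    intro y hy
    rcases List.mem_cons.mp hy with rfl | hy
    · exact hx1
    · exact ih hpos (by omega) y hy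

lemma S_diag {n : ℕ} (hn : 1 ≤ n) : S n n = {List.replicate n 1} := by
  ext l
  constructor
  · rintro ⟨h1, h2, h3, -⟩
    have := all_one l h3 (by omega)
    simp only [Set.mem_singleton_iff]
    exact List.eq_replicate_iff.mpr ⟨h2, this⟩
  · rintro rfl
    obtain ⟨k, rfl⟩ := Nat.exists_eq_add_of_le hn
    refine ⟨by simp [List.sum_replicate], by simp, ?_, ?_⟩ <;>
      · intro x hx
        have := List.eq_of_mem_replicate hx
        subst this
        simp [List.replicate_add, List.replicate_succ]

lemma S_one {n : ℕ} (hn : 1 ≤ n) : S n 1 = {[n]} := by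
  ext l
  constructor
  · rintro ⟨h1, h2, -, -⟩
    obtain ⟨x, rfl⟩ := List.length_eq_one_iff.mp h2
    simp only [List.sum_cons, List.sum_nil, add_zero] at h1
    simp [h1]
  · rintro rfl
    exact ⟨by simp, rfl, by simp; omega, by simp⟩

lemma reduce {n m : ℕ} (hm : 2 ≤ m) (hmn : m < n) {l' : List ℕ} (hl : l' ∈ S n m) :
    ∃ h' t', l' = h' :: t' ∧ 2 ≤ h' ∧
      ((h' - 1) :: ((t'.filter p).map (· - 1))) ∈ S (n - m) (t'.countP p + 1) := by
  obtain ⟨hsum, hlen, hpos, hhead⟩ := hl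
  obtain ⟨h', t', rfl⟩ := List.exists_cons_of_ne_nil
    (l := l') (by intro h; rw [h] at hlen; simp at hlen; omega)
  have hhI : (h' :: t').headI = h' := rfl
  rw [hhI] at hhead
  simp only [List.sum_cons] at hsum
  simp only [List.length_cons] at hlen
  have hh2 : 2 ≤ h' := by
    by_contra hcon
    have hb : (h' :: t').sum ≤ (h' :: t').length • 1 :=
      List.sum_le_card_nsmul _ 1 (fun x hx => le_trans (hhead x hx) (by omega))
    simp only [smul_eq_mul, mul_one, List.length_cons, List.sum_cons] at hb
    omega
  have hposT : ∀ x ∈ t', 0 < x := fun z hz => hpos z (by simp [hz])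
  have hposF : ∀ x ∈ t'.filter p, 0 < x := fun z hz => hposT z (List.mem_of_mem_filter hz)
  have e1 := sum_map_pred (t'.filter p) hposF
  have e2 := sum_filter_split t'
  have e3 := sum_filter_not_eq_length t' hposT
  have e4 := length_filter_split t'
  have e5 : t'.countP p = (t'.filter p).length := List.countP_eq_length_filter
  refine ⟨h', t', rfl, hh2, ?_, ?_, ?_, ?_⟩
  · -- sum
    simp only [List.sum_cons]
    omega
  · -- length
    simp only [List.length_cons, List.length_map, e5]
  · -- positivity
    intro x hx
    rcases List.mem_cons.mp hx with rfl | hx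
    · omega
    · obtain ⟨y, hy, rfl⟩ := List.mem_map.mp hx
      have : 2 ≤ y := by
        have := List.of_mem_filter hy
        simpa [p] using this
      omega
  · -- head bound
    intro x hx
    have hhI2 : ((h' - 1) :: ((t'.filter p).map (· - 1))).headI = h' - 1 := rfl
    rw [hhI2]
    rcases List.mem_cons.mp hx with rfl | hx
    · exact le_refl _
    · obtain ⟨y, hy, rfl⟩ := List.mem_map.mp hx
      have : y ≤ h' := hhead y (List.mem_cons_of_mem _ (List.mem_of_mem_filter hy))
      omega

def Φ : List ℕ × List Bool → List ℕ := fun q => (q.1.headI + 1) :: merge q.2 q.1.tail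

lemma Sj_eq {n m : ℕ} (hm : 2 ≤ m) (hmn : m < n) {j : ℕ} (hj : 1 ≤ j) :
    {l | l ∈ S n m ∧ l.tail.countP p = j - 1} =
      Φ '' ((S (n - m) j) ×ˢ (B (m - 1) (j - 1))) := by
  ext l'
  constructor
  · rintro ⟨hl, hcount⟩
    have hposl := hl.2.2.1
    obtain ⟨h', t', rfl, hh2, hmem⟩ := reduce hm hmn hl
    have htail : (h' :: t').tail = t' := rfl
    rw [htail] at hcount
    have hposT : ∀ x ∈ t', 0 < x := fun z hz => hposl z (by simp [hz])
    have hlenT : t'.length = m - 1 := by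
      have := hl.2.1
      simp only [List.length_cons] at this
      omega
    refine ⟨((h' - 1) :: ((t'.filter p).map (· - 1)), t'.map p), ⟨?_, ?_, ?_⟩, ?_⟩
    · have hje : t'.countP p + 1 = j := by omega
      rw [← hje]
      exact hmem
    · simpa using hlenT
    · rw [count_true_map]
      exact hcount
    · show ((h' - 1) + 1) :: merge (t'.map p) ((t'.filter p).map (· - 1)) = h' :: t'
      rw [merge_recover t' hposT]
      congr 1
      omega
  · rintro ⟨⟨l, b⟩, ⟨hS, hB⟩, rfl⟩
    obtain ⟨hsum, hlen, hposl, hheadl⟩ : l ∈ S (n - m) j := hS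
    obtain ⟨hblen, hbcount⟩ : b.length = m - 1 ∧ b.count true = j - 1 := hB
    obtain ⟨h, t, rfl⟩ := List.exists_cons_of_ne_nil
      (l := l) (by intro hh; rw [hh] at hlen; simp at hlen; omega)
    have hhI : (h :: t).headI = h := rfl
    rw [hhI] at hheadl
    simp only [List.length_cons] at hlen
    simp only [List.sum_cons] at hsum
    have hcnt : b.count true = t.length := by omega
    have hposT : ∀ y ∈ t, 0 < y := fun z hz => hposl z (by simp [hz])
    have hle : ∀ y ∈ t, y ≤ h := fun z hz => hheadl z (by simp [hz])
    have hmb := merge_bounds hle b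
    have hΦ : Φ ((h :: t, b)) = (h + 1) :: merge b t := rfl
    rw [hΦ]
    refine ⟨⟨?_, ?_, ?_, ?_⟩, ?_⟩
    · rw [List.sum_cons, merge_sum b t hcnt, hblen]
      omega
    · rw [List.length_cons, merge_length, hblen]
      omega
    · intro x hx
      rcases List.mem_cons.mp hx with rfl | hx
      · omega
      · exact (hmb x hx).1
    · intro x hx
      have : ((h + 1) :: merge b t).headI = h + 1 := rfl
      rw [this]
      rcases List.mem_cons.mp hx with rfl | hx
      · exact le_refl _
      · exact (hmb x hx).2
    · show (merge b t).countP p = j - 1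
      rw [← count_true_map, merge_map hcnt hposT]
      exact hbcount

lemma Φ_injOn {k m j : ℕ} (hj : 1 ≤ j) :
    Set.InjOn Φ ((S k j) ×ˢ (B (m - 1) (j - 1))) := by
  rintro ⟨l₁, b₁⟩ ⟨hS1, hB1⟩ ⟨l₂, b₂⟩ ⟨hS2, hB2⟩ heq
  obtain ⟨hs1, hl1, hp1, hh1⟩ : l₁ ∈ S k j := hS1
  obtain ⟨hs2, hl2, hp2, hh2⟩ : l₂ ∈ S k j := hS2
  obtain ⟨hb1, hc1⟩ : b₁.length = m - 1 ∧ b₁.count true = j - 1 := hB1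
  obtain ⟨hb2, hc2⟩ : b₂.length = m - 1 ∧ b₂.count true = j - 1 := hB2
  obtain ⟨h₁, t₁, rfl⟩ := List.exists_cons_of_ne_nil
    (l := l₁) (by intro hh; rw [hh] at hl1; simp at hl1; omega)
  obtain ⟨h₂, t₂, rfl⟩ := List.exists_cons_of_ne_nil
    (l := l₂) (by intro hh; rw [hh] at hl2; simp at hl2; omega)
  have heq' : (h₁ + 1) :: merge b₁ t₁ = (h₂ + 1) :: merge b₂ t₂ := heq
  rw [List.cons.injEq] at heq'
  obtain ⟨hh, hmrg⟩ := heq'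
  simp only [List.length_cons] at hl1 hl2
  have hcnt1 : b₁.count true = t₁.length := by omega
  have hcnt2 : b₂.count true = t₂.length := by omega
  have hposT1 : ∀ y ∈ t₁, 0 < y := fun z hz => hp1 z (by simp [hz])
  have hposT2 : ∀ y ∈ t₂, 0 < y := fun z hz => hp2 z (by simp [hz])
  have hb : b₁ = b₂ := by
    rw [← merge_map hcnt1 hposT1, ← merge_map hcnt2 hposT2, hmrg]
  have ht : t₁ = t₂ := by
    have hf : t₁.map (· + 1) = t₂.map (· + 1) := by
      rw [← merge_filter hcnt1 hposT1, ← merge_filter hcnt2 hposT2, hmrg]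
    exact (List.map_injective_iff.mpr (fun a b hab => by omega)) hf
  have : h₁ = h₂ := by omega
  subst this; subst hb; subst ht
  rfl

theorem main4 {n m : ℕ} (hm : 2 ≤ m) (hmn : m < n) :
    (S n m).ncard =
      ∑ j ∈ Finset.Icc 1 (n - m), (S (n - m) j).ncard * (m - 1).choose (j - 1) := by
  classical
  have cover : S n m =
      ⋃ j ∈ Finset.Icc 1 (n - m), {l | l ∈ S n m ∧ l.tail.countP p = j - 1} := by
    ext l'
    constructor
    · intro hl
      obtain ⟨h', t', rfl, hh2, hmem⟩ := reduce hm hmn hl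
      set c := t'.countP p with hc
      have hle : c + 1 ≤ n - m := by
        obtain ⟨hsum', hlen', hpos', -⟩ := hmem
        have := length_le_sum _ hpos'
        rw [hlen', hsum'] at this
        exact this
      have hmemj : (h' :: t') ∈ {l | l ∈ S n m ∧ l.tail.countP p = (c + 1) - 1} :=
        ⟨hl, by simp [hc]⟩
      exact Set.mem_biUnion (Finset.mem_coe.mpr (Finset.mem_Icc.mpr ⟨by omega, hle⟩)) hmemj
    · intro hl
      obtain ⟨j, -, hj⟩ := Set.mem_iUnion₂.mp hl
      exact hj.1
  rw [cover, ncard_biUnion]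
  · apply Finset.sum_congr rfl
    intro j hj
    have hj1 : 1 ≤ j := (Finset.mem_Icc.mp hj).1
    rw [Sj_eq hm hmn hj1, Set.ncard_image_of_injOn (Φ_injOn hj1), ncard_prod, B_card]
  · intro i _
    exact Set.Finite.subset (S_finite n m) (fun l hl => hl.1)
  · intro i hi j hj hij
    rw [Set.disjoint_left]
    rintro l ⟨-, hcl⟩ ⟨-, hcl'⟩
    have hi1 := (Finset.mem_Icc.mp hi).1
    have hj1 := (Finset.mem_Icc.mp hj).1
    omega

end HS

/-- `H n m`: the number of headstrong compositions of `n` with exactly `m` parts,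
i.e. lists of positive integers of length `m` summing to `n` whose first part is
greater than or equal to every part. -/
noncomputable def H (n m : ℕ) : ℕ :=
  {l : List ℕ | l.sum = n ∧ l.length = m ∧ (∀ x ∈ l, 0 < x) ∧ ∀ x ∈ l, x ≤ l.headI}.ncard

theorem stmt17 (n m : ℕ) (hn : 1 ≤ n) :
    (n < m → H n m = 0) ∧ H n n = 1 ∧ H n 1 = 1 ∧
      (1 < m → m < n →
        H n m = ∑ j ∈ Finset.Icc 1 (n - m), H (n - m) j * (m - 1).choose (j - 1)) := by
  have hH : ∀ a b : ℕ, H a b = (HS.S a b).ncard := fun a b => rfl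
  refine ⟨?_, ?_, ?_, ?_⟩
  · intro h
    rw [hH, HS.S_empty h, Set.ncard_empty]
  · rw [hH, HS.S_diag hn, Set.ncard_singleton]
  · rw [hH, HS.S_one hn, Set.ncard_singleton]
  · intro hm hmn
    rw [hH, HS.main4 hm hmn]
    apply Finset.sum_congr rfl
    intro j _
    rw [hH]
end

section
/- Let H(n,m) be the number of headstrong compositions of n with m parts, and let b ≥ 2 be an integer. Then for every positive integer n, 2·Σ_{m=1}^{n} H(n,m)·b^m < Σ_{m=1}^{n+1} H(n+1,m)·b^m. -/
lemma finH (n m : ℕ) :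
    {l : List ℕ | l.sum = n ∧ l.length = m ∧ (∀ x ∈ l, 0 < x) ∧ ∀ x ∈ l, x ≤ l.headI}.Finite := by
  apply Set.Finite.subset (Set.finite_range (fun c : Composition n => c.blocks))
  rintro l ⟨hs, _, hpos, _⟩
  exact ⟨⟨l, fun hi => hpos _ hi, hs⟩, rfl⟩

lemma H_le (n m : ℕ) (hm : 1 ≤ m) : H n m ≤ H (n + 1) (m + 1) := by
  refine Set.ncard_le_ncard_of_injOn (fun l => l ++ [1]) ?_ ?_ (finH _ _)
  · rintro l ⟨hs, hlen, hpos, hhead⟩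
    obtain ⟨a, t, rfl⟩ : ∃ a t, l = a :: t := by
      cases l with
      | nil => simp at hlen; omega
      | cons a t => exact ⟨a, t, rfl⟩
    have ha : 0 < a := hpos a (by simp)
    refine ⟨by simp at hs ⊢; omega, by simp at hlen ⊢; omega, ?_, ?_⟩
    · intro x hx
      rcases List.mem_append.1 hx with h | h
      · exact hpos x h
      · simp at h; omega
    · intro x hx
      rcases List.mem_append.1 hx with h | h
      · simpa using hhead x h
      · simp at h; subst h; exact ha
  · intro l₁ _ l₂ _ h
    exact List.append_cancel_right h

lemma H_one (n : ℕ) : 1 ≤ H (n + 1) 1 := by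
  have hmem : [n + 1] ∈ {l : List ℕ | l.sum = n + 1 ∧ l.length = 1 ∧
      (∀ x ∈ l, 0 < x) ∧ ∀ x ∈ l, x ≤ l.headI} := by
    refine ⟨by simp, rfl, by simp, by simp⟩
  exact (Set.ncard_pos (finH (n + 1) 1)).mpr ⟨_, hmem⟩

theorem stmt18 (b : ℕ) (hb : 2 ≤ b) (n : ℕ) (hn : 1 ≤ n) :
    2 * ∑ m ∈ Finset.Icc 1 n, H n m * b ^ m <
      ∑ m ∈ Finset.Icc 1 (n + 1), H (n + 1) m * b ^ m := by
  have key : ∑ m ∈ Finset.Icc 2 (n + 1), H (n + 1) m * b ^ m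
      = ∑ m ∈ Finset.Icc 1 n, H (n + 1) (m + 1) * b ^ (m + 1) := by
    rw [show Finset.Icc 2 (n + 1) = (Finset.Icc 1 n).map (addRightEmbedding 1) by
      rw [Finset.map_add_right_Icc], Finset.sum_map]
    rfl
  calc 2 * ∑ m ∈ Finset.Icc 1 n, H n m * b ^ m
      ≤ b * ∑ m ∈ Finset.Icc 1 n, H n m * b ^ m :=
        Nat.mul_le_mul_right _ hb
    _ = ∑ m ∈ Finset.Icc 1 n, H n m * b ^ (m + 1) := by
        rw [Finset.mul_sum]
        exact Finset.sum_congr rfl fun m _ => by ring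
    _ ≤ ∑ m ∈ Finset.Icc 1 n, H (n + 1) (m + 1) * b ^ (m + 1) := by
        apply Finset.sum_le_sum
        intro m hm
        exact Nat.mul_le_mul_right _ (H_le n m (Finset.mem_Icc.1 hm).1)
    _ = ∑ m ∈ Finset.Icc 2 (n + 1), H (n + 1) m * b ^ m := key.symm
    _ < ∑ m ∈ Finset.Icc 1 (n + 1), H (n + 1) m * b ^ m := by
        have hpos : 0 < H (n + 1) 1 * b ^ 1 := by
          have := H_one n
          have hb' : 0 < b := by omega
          positivity
        exact Finset.sum_lt_sum_of_subset
          (Finset.Icc_subset_Icc_left (by omega)) (by simp) (by simp) hpos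
          (fun j _ _ => Nat.zero_le _)
end
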